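/- Every melopole is tracial: if H is a connected single-vertex subgraph of a connected graph G whose k lines admit an ordering l₁,…,l_k such that {l₁,…,l_i}/{l₁,…,l_{i−1}} is a d-dipole for every 1≤i≤k, then H is contractible (any flat connection on H is trivial up to gauge: all holonomies around internal faces being the identity forces all line group elements to be the identity, after gauge-fixing a spanning tree) and G/H is connected. -/

import Mathlib

/-! Basic formal model of TGFT Feynman graphs: a rank-`d` TGFT graph is encoded through
its colored extension, a `(d+1)`-edge-colored graph.  Nodes are elements of `V`; for each
color `c : Fin (d+1)` the partial matching `edge c` pairs nodes (color `0` lines are the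
propagator lines, colors `1,…,d` are the internal colored lines of the bubbles). -/
structure PreGraph (d : ℕ) (V : Type) where
  verts : Finset V
  edge : Fin (d + 1) → V → Option V

variable {d : ℕ} {V : Type}

/-- The axioms making the data a genuine `(d+1)`-colored graph: each `edge c` is a
symmetric fixed-point-free partial matching supported on the vertices, which is total
(a perfect matching) for every color `c ≠ 0`. -/
def isColored (G : PreGraph d V) : Prop :=
  (∀ c a b, G.edge c a = some b → G.edge c b = some a) ∧
  (∀ c a b, G.edge c a = some b → a ∈ G.verts ∧ b ∈ G.verts) ∧
  (∀ c a, G.edge c a ≠ some a) ∧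
  (∀ c : Fin (d + 1), c ≠ 0 → ∀ a ∈ G.verts, (G.edge c a).isSome)

/-- `p = (n, n̄)` is a (color-0, i.e. propagator) line of `G`. -/
def isLine (G : PreGraph d V) (p : V × V) : Prop := G.edge 0 p.1 = some p.2

/-- Reconnection of a matching after deletion of the two nodes `n, m`:
partners of `n` and `m` get joined to each other. -/
def reconnect [DecidableEq V] (e : V → Option V) (n m : V) : V → Option V := fun a =>
  if a = n ∨ a = m then none
  else
    match e a with
    | none => none
    | some x =>
      if x = n then
        match e m with
        | none => none
        | some b => if b = n ∨ b = m then none else some b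
      else if x = m then
        match e n with
        | none => none
        | some b => if b = n ∨ b = m then none else some b
      else some x

/-- Contraction of the color-0 line (dipole) with end nodes `n, m`: the two nodes are
deleted together with all colored lines joining them, and the remaining open half-lines
are reconnected according to their colors. -/
def contractLine [DecidableEq V] (G : PreGraph d V) (n m : V) : PreGraph d V :=
  ⟨G.verts \ {n, m}, fun c => reconnect (G.edge c) n m⟩

/-- Successive contraction of a list of lines. -/
def contractList [DecidableEq V] : PreGraph d V → List (V × V) → PreGraph d V
  | G, [] => G
  | G, p :: r => contractList (contractLine G p.1 p.2) r

/-- One step along a face of color `c`: cross the color-`c` line then the color-0 line. -/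
def faceStep (G : PreGraph d V) (c : Fin (d + 1)) (a : V) : Option V :=
  (G.edge c a).bind (G.edge 0)

/-- Iterated face steps. -/
def iterStep (G : PreGraph d V) (c : Fin (d + 1)) : ℕ → V → Option V
  | 0, a => some a
  | k + 1, a => (faceStep G c a).bind (iterStep G c k)

/-- The (oriented) color-0 line crossed by the face of color `c` right after node `b`. -/
def crossedPair (G : PreGraph d V) (c : Fin (d + 1)) (b : V) : Option (V × V) :=
  match G.edge c b with
  | none => none
  | some x =>
    match G.edge 0 x with
    | none => none
    | some y => some (x, y)

/-- Two ordered pairs represent the same unordered line. -/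
def pairMatch (p q : V × V) : Prop := p = q ∨ p = (q.2, q.1)

/-- The face of color `c` through node `a` closes with period `k` (an internal face of `G`). -/
def ClosedFace (G : PreGraph d V) (c : Fin (d + 1)) (a : V) (k : ℕ) : Prop :=
  0 < k ∧ iterStep G c k a = some a

/-- The face of color `c` (of period `k`, based at `a`) passes through the line `p`. -/
def FaceCrosses (G : PreGraph d V) (c : Fin (d + 1)) (a : V) (k : ℕ) (p : V × V) : Prop :=
  ∃ j < k, ∃ b, iterStep G c j a = some b ∧
    ∃ xy, crossedPair G c b = some xy ∧ pairMatch xy p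

/-- A closed face all of whose color-0 lines belong to the subgraph `S`
(an internal face of the subgraph `S`). -/
def ClosedFaceIn (G : PreGraph d V) (S : Finset (V × V)) (c : Fin (d + 1)) (a : V)
    (k : ℕ) : Prop :=
  ClosedFace G c a k ∧
    ∀ j < k, ∀ b, iterStep G c j a = some b →
      ∃ q ∈ S, ∃ xy, crossedPair G c b = some xy ∧ pairMatch xy q

/-- Two lines of `S` lie on a common internal face of `S`: this realizes the line–face
incidence used to define connectedness of tensorial subgraphs. -/
def InternalFaceRel (G : PreGraph d V) (S : Finset (V × V)) (p q : V × V) : Prop :=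
  ∃ c : Fin (d + 1), c ≠ 0 ∧ ∃ a k, ClosedFaceIn G S c a k ∧
    FaceCrosses G c a k p ∧ FaceCrosses G c a k q

/-- Connectedness of the subgraph `S` in the tensorial (face-incidence) sense. -/
def ConnectedSub (G : PreGraph d V) (S : Finset (V × V)) : Prop :=
  ∀ p ∈ S, ∀ q ∈ S, Relation.EqvGen (InternalFaceRel G S) p q

/-- Two lines of `G` lie on a common closed face of `G`. -/
def WholeFaceRel (G : PreGraph d V) (p q : V × V) : Prop :=
  ∃ c : Fin (d + 1), c ≠ 0 ∧ ∃ a k, ClosedFace G c a k ∧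
    FaceCrosses G c a k p ∧ FaceCrosses G c a k q

/-- Connectedness of `G` in the tensorial sense: the line–face incidence matrix does not
factorize into blocks, i.e. all pairs of lines are related through internal faces. -/
def GraphConnected (G : PreGraph d V) : Prop :=
  ∀ p q : V × V, isLine G p → isLine G q → Relation.EqvGen (WholeFaceRel G) p q

/-- Number of additional colored lines joining the two end nodes of a line:
a line is a `k`-dipole iff this number is `k - 1`. -/
def shareCount [DecidableEq V] (G : PreGraph d V) (n m : V) : ℕ :=
  (Finset.univ.filter (fun c : Fin (d + 1) => c ≠ 0 ∧ G.edge c n = some m)).card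

/-- Hepp-sector condition of a melopole: each line, in order, is (at least) a `d`-dipole
of the graph in which the previous lines have been contracted. -/
def MeloSteps [DecidableEq V] : PreGraph d V → List (V × V) → Prop
  | _, [] => True
  | G, p :: r => isLine G p ∧ d - 1 ≤ shareCount G p.1 p.2 ∧
      MeloSteps (contractLine G p.1 p.2) r

/-- Adjacency through the colored (non-0) lines: nodes of the same bubble (vertex). -/
def ColoredAdj (G : PreGraph d V) (a b : V) : Prop :=
  ∃ c : Fin (d + 1), c ≠ 0 ∧ G.edge c a = some b

/-- Two nodes belong to the same bubble (interaction vertex). -/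
def SameBubble (G : PreGraph d V) (a b : V) : Prop := Relation.EqvGen (ColoredAdj G) a b

/-- A melopole: a nonempty connected single-vertex (tadpole) subgraph whose lines admit
an ordering (Hepp sector) in which each successive quotient is a `d`-dipole. -/
def IsMelopole [DecidableEq V] (G : PreGraph d V) (S : Finset (V × V)) : Prop :=
  S.Nonempty ∧ (∀ p ∈ S, isLine G p) ∧
  (∀ p ∈ S, ∀ q ∈ S, SameBubble G p.1 q.1) ∧
  (∀ p ∈ S, SameBubble G p.1 p.2) ∧
  ConnectedSub G S ∧
  ∃ l : List (V × V), l.Nodup ∧ l.toFinset = S ∧ MeloSteps G l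

/-- Group element picked up when the face of color `c` crosses, right after node `b`, a
color-0 line of `S` carrying the discrete connection `h` (inverse if crossed backwards,
trivial otherwise). -/
def crossVal {Γ : Type} [Group Γ] [DecidableEq V] (G : PreGraph d V)
    (S : Finset (V × V)) (h : V × V → Γ) (c : Fin (d + 1)) (b : V) : Γ :=
  match crossedPair G c b with
  | none => 1
  | some xy => if xy ∈ S then h xy
               else if (xy.2, xy.1) ∈ S then (h (xy.2, xy.1))⁻¹ else 1

/-- Holonomy of the discrete connection `h` along `k` steps of the face of color `c`
starting at node `b`. -/
def holFrom {Γ : Type} [Group Γ] [DecidableEq V] (G : PreGraph d V)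
    (S : Finset (V × V)) (h : V × V → Γ) (c : Fin (d + 1)) : ℕ → V → Γ
  | 0, _ => 1
  | k + 1, b =>
    crossVal G S h c b *
      (match faceStep G c b with
       | none => 1
       | some b' => holFrom G S h c k b')

set_option linter.unusedSectionVars false

namespace Melo

variable {d : ℕ} {V : Type} [DecidableEq V]

theorem pm_refl (p : V × V) : pairMatch p p := Or.inl rfl

theorem pm_swap (p : V × V) : pairMatch p (p.2, p.1) := Or.inr rfl

theorem pm_symm {p q : V × V} (h : pairMatch p q) : pairMatch q p := by
  rcases h with rfl | h
  · exact Or.inl rfl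
  · right; rw [h]

theorem pm_trans {p q r : V × V} (h1 : pairMatch p q) (h2 : pairMatch q r) :
    pairMatch p r := by
  rcases h1 with rfl | h1
  · exact h2
  · rcases h2 with rfl | h2
    · exact Or.inr h1
    · left; rw [h1, h2]

theorem iterStep_zero (G : PreGraph d V) (c : Fin (d+1)) (a : V) :
    iterStep G c 0 a = some a := rfl

theorem iterStep_succ (G : PreGraph d V) (c : Fin (d+1)) (k : ℕ) (a : V) :
    iterStep G c (k+1) a = (faceStep G c a).bind (iterStep G c k) := rfl

theorem iterStep_add (G : PreGraph d V) (c : Fin (d+1)) (s t : ℕ) (a : V) :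
    iterStep G c (s + t) a = (iterStep G c s a).bind (iterStep G c t) := by
  induction s generalizing a with
  | zero => rw [Nat.zero_add, iterStep_zero, Option.bind_some]
  | succ s ih =>
      have hst : s + 1 + t = (s + t) + 1 := by omega
      rw [hst, iterStep_succ, iterStep_succ]
      cases hfs : faceStep G c a with
      | none => rfl
      | some b => rw [Option.bind_some, Option.bind_some, ih]

theorem iterStep_one (G : PreGraph d V) (c : Fin (d+1)) (a : V) :
    iterStep G c 1 a = faceStep G c a := by
  rw [iterStep_succ]
  cases hfs : faceStep G c a with
  | none => rfl
  | some b => rw [Option.bind_some, iterStep_zero]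

theorem iterStep_succ_some {G : PreGraph d V} {c : Fin (d+1)} {k : ℕ} {a b : V}
    (h : iterStep G c (k+1) a = some b) :
    ∃ a', faceStep G c a = some a' ∧ iterStep G c k a' = some b := by
  rw [iterStep_succ] at h
  cases hfs : faceStep G c a with
  | none => rw [hfs] at h; cases h
  | some a' => rw [hfs, Option.bind_some] at h; exact ⟨a', rfl, h⟩

theorem rot {G : PreGraph d V} {c : Fin (d+1)} {k j : ℕ} {a b : V}
    (hk : iterStep G c k a = some a) (hj : iterStep G c j a = some b) (hjk : j ≤ k) :
    iterStep G c k b = some b ∧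
    ∀ t x, t < k → iterStep G c t a = some x →
      ∃ t' < k, iterStep G c t' b = some x := by
  have hsplit : iterStep G c (j + (k - j)) a = some a := by
    rwa [Nat.add_sub_cancel' hjk]
  rw [iterStep_add, hj, Option.bind_some] at hsplit
  have hkb : iterStep G c k b = some b := by
    have h2 : iterStep G c ((k - j) + j) b = some b := by
      rw [iterStep_add, hsplit, Option.bind_some]; exact hj
    rwa [Nat.sub_add_cancel hjk] at h2
  refine ⟨hkb, ?_⟩
  intro t x ht hx
  have h1 : iterStep G c ((k - j) + t) b = some x := by
    rw [iterStep_add, hsplit, Option.bind_some]; exact hx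
  by_cases hlt : (k - j) + t < k
  · exact ⟨_, hlt, h1⟩
  · have hle : k ≤ (k - j) + t := Nat.le_of_not_lt hlt
    have h2 : iterStep G c (k + ((k - j) + t - k)) b = some x := by
      rwa [Nat.add_sub_cancel' hle]
    rw [iterStep_add, hkb, Option.bind_some] at h2
    exact ⟨(k - j) + t - k, by omega, h2⟩

theorem pred_exists {G : PreGraph d V} {c : Fin (d+1)} {k : ℕ} {a : V}
    (hk : iterStep G c k a = some a) (hk0 : 0 < k) :
    ∃ z t, t < k ∧ iterStep G c t a = some z ∧ faceStep G c z = some a := by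
  have h1 : iterStep G c ((k-1) + 1) a = some a := by
    rwa [Nat.sub_add_cancel hk0]
  rw [iterStep_add] at h1
  cases hz : iterStep G c (k-1) a with
  | none => rw [hz] at h1; cases h1
  | some z =>
      rw [hz, Option.bind_some, iterStep_one] at h1
      exact ⟨z, k-1, by omega, hz, h1⟩

theorem crossedPair_some_of {G : PreGraph d V} {c : Fin (d+1)} {b x y : V}
    (h1 : G.edge c b = some x) (h2 : G.edge 0 x = some y) :
    crossedPair G c b = some (x, y) := by
  simp only [crossedPair, h1, h2]

theorem crossedPair_char {G : PreGraph d V} {c : Fin (d+1)} {b : V} {xy : V × V}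
    (h : crossedPair G c b = some xy) :
    G.edge c b = some xy.1 ∧ G.edge 0 xy.1 = some xy.2 := by
  obtain ⟨x, y⟩ := xy
  cases h1 : G.edge c b with
  | none => simp only [crossedPair, h1] at h; cases h
  | some u =>
      cases h2 : G.edge 0 u with
      | none => simp only [crossedPair, h1, h2] at h; cases h
      | some v =>
          simp only [crossedPair, h1, h2, Option.some_inj, Prod.mk.injEq] at h
          obtain ⟨rfl, rfl⟩ := h
          exact ⟨rfl, h2⟩

theorem faceStep_def (G : PreGraph d V) (c : Fin (d+1)) (b : V) :
    faceStep G c b = (G.edge c b).bind (G.edge 0) := rfl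

theorem faceStep_of_crossedPair {G : PreGraph d V} {c : Fin (d+1)} {b : V} {xy : V × V}
    (h : crossedPair G c b = some xy) : faceStep G c b = some xy.2 := by
  rcases crossedPair_char h with ⟨h1, h2⟩
  rw [faceStep_def, h1, Option.bind_some, h2]

theorem crossedPair_of_faceStep {G : PreGraph d V} {c : Fin (d+1)} {b y : V}
    (h : faceStep G c b = some y) :
    ∃ xy, crossedPair G c b = some xy ∧ xy.2 = y := by
  rw [faceStep_def] at h
  rcases hx : G.edge c b with _ | x
  · rw [hx] at h; cases h
  · rw [hx, Option.bind_some] at h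
    exact ⟨(x, y), crossedPair_some_of hx h, rfl⟩

end Melo
namespace Melo

section Recon
variable {d : ℕ} {V : Type} [DecidableEq V]

theorem recon_at_deleted {e : V → Option V} {n m a : V} (h : a = n ∨ a = m) :
    reconnect e n m a = none := by
  simp only [reconnect, if_pos h]

theorem recon_inv {e : V → Option V} {n m a b : V} (h : reconnect e n m a = some b) :
    (a ≠ n ∧ a ≠ m) ∧ (b ≠ n ∧ b ≠ m) ∧
      (e a = some b ∨ (e a = some n ∧ e m = some b) ∨
        (e a = some m ∧ e n = some b)) := by
  by_cases ha : a = n ∨ a = m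
  · rw [recon_at_deleted ha] at h; cases h
  · have ha' : a ≠ n ∧ a ≠ m := by tauto
    cases he : e a with
    | none =>
        simp only [reconnect, if_neg ha, he] at h
        cases h
    | some x =>
        simp only [reconnect, if_neg ha, he] at h
        by_cases hxn : x = n
        · rw [if_pos hxn] at h
          cases hem : e m with
          | none =>
              simp only [hem] at h
              cases h
          | some w =>
              simp only [hem] at h
              by_cases hw : w = n ∨ w = m
              · rw [if_pos hw] at h; cases h
              · rw [if_neg hw] at h
                rw [Option.some_inj] at h
                subst h
                exact ⟨ha', by tauto, Or.inr (Or.inl ⟨by rw [hxn], rfl⟩)⟩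
        · rw [if_neg hxn] at h
          by_cases hxm : x = m
          · rw [if_pos hxm] at h
            cases hen : e n with
            | none =>
                simp only [hen] at h
                cases h
            | some w =>
                simp only [hen] at h
                by_cases hw : w = n ∨ w = m
                · rw [if_pos hw] at h; cases h
                · rw [if_neg hw] at h
                  rw [Option.some_inj] at h
                  subst h
                  exact ⟨ha', by tauto, Or.inr (Or.inr ⟨by rw [hxm], rfl⟩)⟩
          · rw [if_neg hxm, Option.some_inj] at h
            subst h
            exact ⟨ha', ⟨hxn, hxm⟩, Or.inl rfl⟩

theorem recon_build {e : V → Option V} {n m a b : V}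
    (ha1 : a ≠ n) (ha2 : a ≠ m) (hb1 : b ≠ n) (hb2 : b ≠ m)
    (h : e a = some b ∨ (e a = some n ∧ e m = some b) ∨
      (e a = some m ∧ e n = some b)) :
    reconnect e n m a = some b := by
  have hna : ¬(a = n ∨ a = m) := by tauto
  have hnb : ¬(b = n ∨ b = m) := by tauto
  rcases h with h1 | ⟨h1, h2⟩ | ⟨h1, h2⟩
  · simp [reconnect, if_neg hna, h1, hb1, hb2]
  · simp [reconnect, if_neg hna, h1, h2, hnb, hb1, hb2]
  · by_cases hmn : m = n
    · subst hmn
      simp [reconnect, hna, h1, h2, hb1, hb2, ha2, hb2]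
    · simp [reconnect, if_neg hna, h1, h2, hnb, hb1, hb2, hmn]

theorem recon_symm {e : V → Option V}
    (hsym : ∀ a b, e a = some b → e b = some a)
    {n m : V} : ∀ a b, reconnect e n m a = some b → reconnect e n m b = some a := by
  intro a b h
  obtain ⟨⟨ha1, ha2⟩, ⟨hb1, hb2⟩, hcase⟩ := recon_inv h
  rcases hcase with h1 | ⟨h1, h2⟩ | ⟨h1, h2⟩
  · exact recon_build hb1 hb2 ha1 ha2 (Or.inl (hsym _ _ h1))
  · exact recon_build hb1 hb2 ha1 ha2 (Or.inr (Or.inr ⟨hsym _ _ h2, hsym _ _ h1⟩))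
  · exact recon_build hb1 hb2 ha1 ha2 (Or.inr (Or.inl ⟨hsym _ _ h2, hsym _ _ h1⟩))

theorem recon_irr {e : V → Option V}
    (hsym : ∀ a b, e a = some b → e b = some a)
    (hirr : ∀ a, e a ≠ some a) {n m : V} (hne : n ≠ m) :
    ∀ a, reconnect e n m a ≠ some a := by
  intro a h
  obtain ⟨⟨ha1, ha2⟩, _, hcase⟩ := recon_inv h
  rcases hcase with h1 | ⟨h1, h2⟩ | ⟨h1, h2⟩
  · exact hirr a h1
  · have := hsym _ _ h2
    rw [h1] at this
    exact hne (Option.some_inj.1 this)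
  · have := hsym _ _ h2
    rw [h1] at this
    exact hne (Option.some_inj.1 this).symm

theorem recon_comm_le {e : V → Option V}
    (hsym : ∀ a b, e a = some b → e b = some a) (hirr : ∀ a, e a ≠ some a)
    {n m n' m' : V} (h12 : n ≠ m) (h34 : n' ≠ m')
    (d1 : n ≠ n') (d2 : n ≠ m') (d3 : m ≠ n') (d4 : m ≠ m')
    {a b : V} (h : reconnect (reconnect e n m) n' m' a = some b) :
    reconnect (reconnect e n' m') n m a = some b := by
  obtain ⟨⟨han', ham'⟩, ⟨hbn', hbm'⟩, hcase⟩ := recon_inv h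
  rcases hcase with hfa | ⟨hfa, hfb⟩ | ⟨hfa, hfb⟩
  · -- plain outer
    obtain ⟨⟨han, ham⟩, ⟨hbn, hbm⟩, hatoms⟩ := recon_inv hfa
    rcases hatoms with h1 | ⟨h1, h2⟩ | ⟨h1, h2⟩
    · exact recon_build han ham hbn hbm
        (Or.inl (recon_build han' ham' hbn' hbm' (Or.inl h1)))
    · exact recon_build han ham hbn hbm (Or.inr (Or.inl
        ⟨recon_build han' ham' d1 d2 (Or.inl h1),
         recon_build d3 d4 hbn' hbm' (Or.inl h2)⟩))
    · exact recon_build han ham hbn hbm (Or.inr (Or.inr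
        ⟨recon_build han' ham' d3 d4 (Or.inl h1),
         recon_build d1 d2 hbn' hbm' (Or.inl h2)⟩))
  · -- outer via n' : f a = some n', f m' = some b
    obtain ⟨⟨han, ham⟩, ⟨hn'n, hn'm⟩, hatoms1⟩ := recon_inv hfa
    obtain ⟨⟨hm'n, hm'm⟩, ⟨hbn, hbm⟩, hatoms2⟩ := recon_inv hfb
    rcases hatoms1 with h1 | ⟨h1, h2⟩ | ⟨h1, h2⟩ <;>
      rcases hatoms2 with h3 | ⟨h3, h4⟩ | ⟨h3, h4⟩
    · -- e a = n' ; e m' = b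
      exact recon_build han ham hbn hbm (Or.inl
        (recon_build han' ham' hbn' hbm' (Or.inr (Or.inl ⟨h1, h3⟩))))
    · -- e a = n' ; e m' = n, e m = b
      exact recon_build han ham hbn hbm (Or.inr (Or.inl
        ⟨recon_build han' ham' d1 d2 (Or.inr (Or.inl ⟨h1, h3⟩)),
         recon_build d3 d4 hbn' hbm' (Or.inl h4)⟩))
    · -- e a = n' ; e m' = m, e n = b
      exact recon_build han ham hbn hbm (Or.inr (Or.inr
        ⟨recon_build han' ham' d3 d4 (Or.inr (Or.inl ⟨h1, h3⟩)),
         recon_build d1 d2 hbn' hbm' (Or.inl h4)⟩))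
    · -- e a = n, e m = n' ; e m' = b
      exact recon_build han ham hbn hbm (Or.inr (Or.inl
        ⟨recon_build han' ham' d1 d2 (Or.inl h1),
         recon_build d3 d4 hbn' hbm' (Or.inr (Or.inl ⟨h2, h3⟩))⟩))
    · -- e a = n, e m = n' ; e m' = n, e m = b : kill
      exact absurd (Option.some_inj.1 (h2.symm.trans h4)) (Ne.symm hbn')
    · -- e a = n, e m = n' ; e m' = m, e n = b : kill
      have := hsym _ _ h3
      rw [h2] at this
      exact absurd (Option.some_inj.1 this) h34
    · -- e a = m, e n = n' ; e m' = b
      exact recon_build han ham hbn hbm (Or.inr (Or.inr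
        ⟨recon_build han' ham' d3 d4 (Or.inl h1),
         recon_build d1 d2 hbn' hbm' (Or.inr (Or.inl ⟨h2, h3⟩))⟩))
    · -- e a = m, e n = n' ; e m' = n, e m = b : kill
      have := hsym _ _ h3
      rw [h2] at this
      exact absurd (Option.some_inj.1 this) h34
    · -- e a = m, e n = n' ; e m' = m, e n = b : kill
      exact absurd (Option.some_inj.1 (h2.symm.trans h4)) (Ne.symm hbn')
  · -- outer via m' : f a = some m', f n' = some b
    obtain ⟨⟨han, ham⟩, ⟨hm'n, hm'm⟩, hatoms1⟩ := recon_inv hfa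
    obtain ⟨⟨hn'n, hn'm⟩, ⟨hbn, hbm⟩, hatoms2⟩ := recon_inv hfb
    rcases hatoms1 with h1 | ⟨h1, h2⟩ | ⟨h1, h2⟩ <;>
      rcases hatoms2 with h3 | ⟨h3, h4⟩ | ⟨h3, h4⟩
    · exact recon_build han ham hbn hbm (Or.inl
        (recon_build han' ham' hbn' hbm' (Or.inr (Or.inr ⟨h1, h3⟩))))
    · exact recon_build han ham hbn hbm (Or.inr (Or.inl
        ⟨recon_build han' ham' d1 d2 (Or.inr (Or.inr ⟨h1, h3⟩)),
         recon_build d3 d4 hbn' hbm' (Or.inl h4)⟩))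
    · exact recon_build han ham hbn hbm (Or.inr (Or.inr
        ⟨recon_build han' ham' d3 d4 (Or.inr (Or.inr ⟨h1, h3⟩)),
         recon_build d1 d2 hbn' hbm' (Or.inl h4)⟩))
    · exact recon_build han ham hbn hbm (Or.inr (Or.inl
        ⟨recon_build han' ham' d1 d2 (Or.inl h1),
         recon_build d3 d4 hbn' hbm' (Or.inr (Or.inr ⟨h2, h3⟩))⟩))
    · -- e a = n, e m = m' ; e n' = n, e m = b : kill
      exact absurd (Option.some_inj.1 (h2.symm.trans h4)) (Ne.symm hbm')
    · -- e a = n, e m = m' ; e n' = m, e n = b : kill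
      have := hsym _ _ h3
      rw [h2] at this
      exact absurd (Option.some_inj.1 this) (Ne.symm h34)
    · exact recon_build han ham hbn hbm (Or.inr (Or.inr
        ⟨recon_build han' ham' d3 d4 (Or.inl h1),
         recon_build d1 d2 hbn' hbm' (Or.inr (Or.inr ⟨h2, h3⟩))⟩))
    · -- e a = m, e n = m' ; e n' = n, e m = b : kill
      have := hsym _ _ h3
      rw [h2] at this
      exact absurd (Option.some_inj.1 this) (Ne.symm h34)
    · -- e a = m, e n = m' ; e n' = m, e n = b : kill
      exact absurd (Option.some_inj.1 (h2.symm.trans h4)) (Ne.symm hbm')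

theorem recon_comm {e : V → Option V}
    (hsym : ∀ a b, e a = some b → e b = some a) (hirr : ∀ a, e a ≠ some a)
    {n m n' m' : V} (h12 : n ≠ m) (h34 : n' ≠ m')
    (d1 : n ≠ n') (d2 : n ≠ m') (d3 : m ≠ n') (d4 : m ≠ m') :
    reconnect (reconnect e n m) n' m' = reconnect (reconnect e n' m') n m := by
  funext a
  cases h1 : reconnect (reconnect e n m) n' m' a with
  | none =>
      cases h2 : reconnect (reconnect e n' m') n m a with
      | none => rfl
      | some b =>
          have := recon_comm_le hsym hirr h34 h12 d1.symm d3.symm d2.symm d4.symm h2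
          rw [h1] at this; cases this
  | some b =>
      exact (recon_comm_le hsym hirr h12 h34 d1 d2 d3 d4 h1).symm

end Recon
section Contract
variable {d : ℕ} {V : Type} [DecidableEq V]
variable {G : PreGraph d V} {n m : V}

theorem edge_symm (hG : isColored G) {c : Fin (d+1)} {a b : V}
    (h : G.edge c a = some b) : G.edge c b = some a := hG.1 c a b h

theorem edge_irr (hG : isColored G) (c : Fin (d+1)) (a : V) :
    G.edge c a ≠ some a := hG.2.2.1 c a

theorem edge_inj (hG : isColored G) {c : Fin (d+1)} {x y u : V}
    (h1 : G.edge c x = some u) (h2 : G.edge c y = some u) : x = y := by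
  have k1 := edge_symm hG h1
  have k2 := edge_symm hG h2
  rw [k1] at k2
  exact Option.some_inj.1 k2

theorem contract_edge (G : PreGraph d V) (n m : V) (c : Fin (d+1)) :
    (contractLine G n m).edge c = reconnect (G.edge c) n m := rfl

theorem contract_edge_deleted (G : PreGraph d V) (c : Fin (d+1)) {a : V}
    (h : a = n ∨ a = m) : (contractLine G n m).edge c a = none :=
  recon_at_deleted h

theorem contract_edge_none (c : Fin (d+1)) {a : V} (h : G.edge c a = none) :
    (contractLine G n m).edge c a = none := by
  by_cases ha : a = n ∨ a = m
  · exact contract_edge_deleted G c ha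
  · rw [contract_edge]; simp only [reconnect, if_neg ha, h]

theorem mem_contract_verts {a : V} :
    a ∈ (contractLine G n m).verts ↔ a ∈ G.verts ∧ a ≠ n ∧ a ≠ m := by
  show a ∈ G.verts \ {n, m} ↔ _
  simp only [Finset.mem_sdiff, Finset.mem_insert, Finset.mem_singleton, not_or]

theorem line_ne (hG : isColored G) (hnm : G.edge 0 n = some m) : n ≠ m :=
  fun h => edge_irr hG 0 n (by rw [hnm, h])

theorem e0_m (hG : isColored G) (hnm : G.edge 0 n = some m) :
    G.edge 0 m = some n := edge_symm hG hnm

theorem e0_avoid (hG : isColored G) (hnm : G.edge 0 n = some m) {x z : V}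
    (hx1 : x ≠ n) (hx2 : x ≠ m) (h : G.edge 0 x = some z) : z ≠ n ∧ z ≠ m := by
  constructor
  · intro hh; subst hh
    exact hx2 (edge_inj hG h (e0_m hG hnm))
  · intro hh; subst hh
    exact hx1 (edge_inj hG h hnm)

theorem contract_edge0_eq (hG : isColored G) (hnm : G.edge 0 n = some m) {a : V}
    (ha1 : a ≠ n) (ha2 : a ≠ m) :
    (contractLine G n m).edge 0 a = G.edge 0 a := by
  have hna : ¬(a = n ∨ a = m) := by tauto
  cases he : G.edge 0 a with
  | none => rw [contract_edge]; simp only [reconnect, if_neg hna, he]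
  | some z =>
      obtain ⟨hz1, hz2⟩ := e0_avoid hG hnm ha1 ha2 he
      rw [contract_edge]
      exact recon_build ha1 ha2 hz1 hz2 (Or.inl he)

theorem step_plain (hG : isColored G) (hnm : G.edge 0 n = some m)
    {c : Fin (d+1)} {a x : V} (ha1 : a ≠ n) (ha2 : a ≠ m)
    (hx : G.edge c a = some x) (hx1 : x ≠ n) (hx2 : x ≠ m) :
    faceStep (contractLine G n m) c a = faceStep G c a ∧
    crossedPair (contractLine G n m) c a = crossedPair G c a := by
  have he' : (contractLine G n m).edge c a = some x := by
    rw [contract_edge]; exact recon_build ha1 ha2 hx1 hx2 (Or.inl hx)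
  have h0 : (contractLine G n m).edge 0 x = G.edge 0 x :=
    contract_edge0_eq hG hnm hx1 hx2
  constructor
  · rw [faceStep_def, faceStep_def, he', hx, Option.bind_some, Option.bind_some, h0]
  · simp only [crossedPair, he', hx, h0]

theorem step_none {c : Fin (d+1)} {a : V} (hx : G.edge c a = none) :
    faceStep (contractLine G n m) c a = none ∧ faceStep G c a = none ∧
    crossedPair (contractLine G n m) c a = none ∧ crossedPair G c a = none := by
  have he' : (contractLine G n m).edge c a = none := contract_edge_none c hx
  refine ⟨?_, ?_, ?_, ?_⟩ <;> simp [faceStep_def, crossedPair, he', hx]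

theorem step_n (hG : isColored G) (hnm : G.edge 0 n = some m)
    {c : Fin (d+1)} {a : V} (hc : c ≠ 0) (ha1 : a ≠ n) (ha2 : a ≠ m)
    (hx : G.edge c a = some n) :
    ∃ y, G.edge c m = some y ∧ y ≠ n ∧ y ≠ m ∧
      faceStep G c a = some m ∧ crossedPair G c a = some (n, m) ∧
      faceStep (contractLine G n m) c a = faceStep G c m ∧
      crossedPair (contractLine G n m) c a = crossedPair G c m := by
  have hmv : m ∈ G.verts := (hG.2.1 0 n m hnm).2
  obtain ⟨y, hy⟩ := Option.isSome_iff_exists.1 (hG.2.2.2 c hc m hmv)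
  have hyn : y ≠ n := by
    intro hh; subst hh
    have k1 := edge_symm hG hy
    have k2 := edge_symm hG hx
    rw [k1] at k2
    exact ha2 (Option.some_inj.1 k2).symm
  have hym : y ≠ m := fun hh => edge_irr hG c m (hh ▸ hy)
  have he' : (contractLine G n m).edge c a = some y := by
    rw [contract_edge]; exact recon_build ha1 ha2 hyn hym (Or.inr (Or.inl ⟨hx, hy⟩))
  have h0 : (contractLine G n m).edge 0 y = G.edge 0 y :=
    contract_edge0_eq hG hnm hyn hym
  refine ⟨y, hy, hyn, hym, ?_, ?_, ?_, ?_⟩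
  · rw [faceStep_def, hx, Option.bind_some, hnm]
  · exact crossedPair_some_of hx hnm
  · rw [faceStep_def, faceStep_def, he', hy, Option.bind_some, Option.bind_some, h0]
  · simp only [crossedPair, he', hy, h0]

theorem step_m (hG : isColored G) (hnm : G.edge 0 n = some m)
    {c : Fin (d+1)} {a : V} (hc : c ≠ 0) (ha1 : a ≠ n) (ha2 : a ≠ m)
    (hx : G.edge c a = some m) :
    ∃ y, G.edge c n = some y ∧ y ≠ n ∧ y ≠ m ∧
      faceStep G c a = some n ∧ crossedPair G c a = some (m, n) ∧
      faceStep (contractLine G n m) c a = faceStep G c n ∧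
      crossedPair (contractLine G n m) c a = crossedPair G c n := by
  have hnv : n ∈ G.verts := (hG.2.1 0 n m hnm).1
  obtain ⟨y, hy⟩ := Option.isSome_iff_exists.1 (hG.2.2.2 c hc n hnv)
  have hyn : y ≠ n := fun hh => edge_irr hG c n (hh ▸ hy)
  have hym : y ≠ m := by
    intro hh; subst hh
    have k1 := edge_symm hG hy
    have k2 := edge_symm hG hx
    rw [k1] at k2
    exact ha1 (Option.some_inj.1 k2).symm
  have he' : (contractLine G n m).edge c a = some y := by
    rw [contract_edge]; exact recon_build ha1 ha2 hyn hym (Or.inr (Or.inr ⟨hx, hy⟩))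
  have h0 : (contractLine G n m).edge 0 y = G.edge 0 y :=
    contract_edge0_eq hG hnm hyn hym
  refine ⟨y, hy, hyn, hym, ?_, ?_, ?_, ?_⟩
  · rw [faceStep_def, hx, Option.bind_some, e0_m hG hnm]
  · exact crossedPair_some_of hx (e0_m hG hnm)
  · rw [faceStep_def, faceStep_def, he', hy, Option.bind_some, Option.bind_some, h0]
  · simp only [crossedPair, he', hy, h0]

theorem isColored_contract (hG : isColored G) (hn : n ∈ G.verts) (hm : m ∈ G.verts)
    (hne : n ≠ m) : isColored (contractLine G n m) := by
  refine ⟨?_, ?_, ?_, ?_⟩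
  · intro c a b h
    rw [contract_edge] at h ⊢
    exact recon_symm (hG.1 c) _ _ h
  · intro c a b h
    rw [contract_edge] at h
    obtain ⟨⟨ha1, ha2⟩, ⟨hb1, hb2⟩, hcase⟩ := recon_inv h
    have hmem : a ∈ G.verts ∧ b ∈ G.verts := by
      rcases hcase with h1 | ⟨h1, h2⟩ | ⟨h1, h2⟩
      · exact hG.2.1 c a b h1
      · exact ⟨(hG.2.1 c a n h1).1, (hG.2.1 c m b h2).2⟩
      · exact ⟨(hG.2.1 c a m h1).1, (hG.2.1 c n b h2).2⟩
    exact ⟨mem_contract_verts.2 ⟨hmem.1, ha1, ha2⟩,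
           mem_contract_verts.2 ⟨hmem.2, hb1, hb2⟩⟩
  · intro c a
    rw [contract_edge]
    exact recon_irr (hG.1 c) (hG.2.2.1 c) hne a
  · intro c hc a ha
    obtain ⟨haV, ha1, ha2⟩ := mem_contract_verts.1 ha
    obtain ⟨x, hx⟩ := Option.isSome_iff_exists.1 (hG.2.2.2 c hc a haV)
    by_cases hxn : x = n
    · rw [hxn] at hx
      obtain ⟨y, hy⟩ := Option.isSome_iff_exists.1 (hG.2.2.2 c hc m hm)
      have hyn : y ≠ n := by
        intro hh; subst hh
        have k1 := edge_symm hG hy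
        have k2 := edge_symm hG hx
        rw [k1] at k2
        exact ha2 (Option.some_inj.1 k2).symm
      have hym : y ≠ m := fun hh => edge_irr hG c m (hh ▸ hy)
      rw [contract_edge, recon_build ha1 ha2 hyn hym (Or.inr (Or.inl ⟨hx, hy⟩))]
      rfl
    · by_cases hxm : x = m
      · rw [hxm] at hx
        obtain ⟨y, hy⟩ := Option.isSome_iff_exists.1 (hG.2.2.2 c hc n hn)
        have hyn : y ≠ n := fun hh => edge_irr hG c n (hh ▸ hy)
        have hym : y ≠ m := by
          intro hh; subst hh
          have k1 := edge_symm hG hy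
          have k2 := edge_symm hG hx
          rw [k1] at k2
          exact ha1 (Option.some_inj.1 k2).symm
        rw [contract_edge, recon_build ha1 ha2 hyn hym (Or.inr (Or.inr ⟨hx, hy⟩))]
        rfl
      · rw [contract_edge, recon_build ha1 ha2 hxn hxm (Or.inl hx)]
        rfl

end Contract
section Faces
variable {d : ℕ} {V : Type} [DecidableEq V]
variable {G : PreGraph d V} {n m : V}

theorem contract_step_avoid {c : Fin (d+1)} {a b : V}
    (h : faceStep (contractLine G n m) c a = some b) : b ≠ n ∧ b ≠ m := by
  rw [faceStep_def] at h
  cases he : (contractLine G n m).edge c a with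
  | none => rw [he] at h; cases h
  | some x =>
      rw [he, Option.bind_some] at h
      rw [contract_edge] at h
      obtain ⟨_, hb, _⟩ := recon_inv h
      exact hb

theorem down (hG : isColored G) (hnm : G.edge 0 n = some m) {c : Fin (d+1)}
    (hc : c ≠ 0) :
    ∀ k a b, a ≠ n → a ≠ m → iterStep G c k a = some b → b ≠ n → b ≠ m →
    ∃ k', k' ≤ k ∧ (0 < k → 0 < k') ∧
      iterStep (contractLine G n m) c k' a = some b ∧
      ∀ j x xy, j < k → iterStep G c j a = some x → crossedPair G c x = some xy →
        ¬ pairMatch xy (n, m) →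
        ∃ j' x', j' < k' ∧ iterStep (contractLine G n m) c j' a = some x' ∧
          crossedPair (contractLine G n m) c x' = some xy := by
  intro k
  induction k using Nat.strong_induction_on with
  | _ k IH =>
  cases k with
  | zero =>
      intro a b _ _ hab _ _
      rw [iterStep_zero, Option.some_inj] at hab
      subst hab
      exact ⟨0, le_refl 0, fun h => h, iterStep_zero _ _ _, fun j x xy hj => by omega⟩
  | succ k1 =>
      intro a b ha1 ha2 hab hb1 hb2
      obtain ⟨a1, hstep, hrest⟩ := iterStep_succ_some hab
      cases hx : G.edge c a with
      | none => rw [faceStep_def, hx] at hstep; cases hstep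
      | some x =>
      by_cases hxn : x = n
      · -- crossing the contracted line through m
        rw [hxn] at hx
        obtain ⟨y, hy, hyn, hym, hfa, hcp, hfs', hcp'⟩ := step_n hG hnm hc ha1 ha2 hx
        have ha1m : a1 = m := by
          rw [hfa] at hstep; exact (Option.some_inj.1 hstep).symm
        rw [ha1m] at hrest
        cases k1 with
        | zero =>
            rw [iterStep_zero, Option.some_inj] at hrest
            exact absurd hrest.symm hb2
        | succ k2 =>
            obtain ⟨a2, hstep2, hrest2⟩ := iterStep_succ_some hrest
            have hGa2 : faceStep (contractLine G n m) c a = some a2 := by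
              rw [hfs']; exact hstep2
            have ha2nm : a2 ≠ n ∧ a2 ≠ m := by
              have h2 := hstep2
              rw [faceStep_def, hy, Option.bind_some] at h2
              exact e0_avoid hG hnm hyn hym h2
            obtain ⟨k', hk'le, hk'pos, hiter', hcross⟩ :=
              IH k2 (by omega) a2 b ha2nm.1 ha2nm.2 hrest2 hb1 hb2
            refine ⟨k' + 1, by omega, fun _ => by omega, ?_, ?_⟩
            · rw [iterStep_succ, hGa2, Option.bind_some]; exact hiter'
            · intro j x0 xy hj hx0 hcpx hnpm
              match j with
              | 0 =>
                  rw [iterStep_zero, Option.some_inj] at hx0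
                  rw [← hx0] at hcpx
                  rw [hcp] at hcpx
                  rw [Option.some_inj] at hcpx
                  exact absurd (hcpx ▸ pm_refl (n, m)) hnpm
              | 1 =>
                  have hx0m : x0 = m := by
                    rw [iterStep_succ, hfa, Option.bind_some, iterStep_zero,
                      Option.some_inj] at hx0
                    exact hx0.symm
                  refine ⟨0, a, by omega, iterStep_zero _ _ _, ?_⟩
                  rw [hcp']
                  rw [hx0m] at hcpx
                  exact hcpx
              | (j2+2) =>
                  have hx0' : iterStep G c j2 a2 = some x0 := by
                    rw [show j2 + 2 = 1 + (1 + j2) by omega, iterStep_add,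
                      iterStep_one, hfa, Option.bind_some, iterStep_add,
                      iterStep_one, hstep2, Option.bind_some] at hx0
                    exact hx0
                  obtain ⟨j', x', hj', hit', hcp''⟩ :=
                    hcross j2 x0 xy (by omega) hx0' hcpx hnpm
                  refine ⟨j' + 1, x', by omega, ?_, hcp''⟩
                  rw [iterStep_succ, hGa2, Option.bind_some]; exact hit'
      · by_cases hxm : x = m
        · rw [hxm] at hx
          obtain ⟨y, hy, hyn, hym, hfa, hcp, hfs', hcp'⟩ := step_m hG hnm hc ha1 ha2 hx
          have ha1m : a1 = n := by
            rw [hfa] at hstep; exact (Option.some_inj.1 hstep).symm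
          rw [ha1m] at hrest
          cases k1 with
          | zero =>
              rw [iterStep_zero, Option.some_inj] at hrest
              exact absurd hrest.symm hb1
          | succ k2 =>
              obtain ⟨a2, hstep2, hrest2⟩ := iterStep_succ_some hrest
              have hGa2 : faceStep (contractLine G n m) c a = some a2 := by
                rw [hfs']; exact hstep2
              have ha2nm : a2 ≠ n ∧ a2 ≠ m := by
                have h2 := hstep2
                rw [faceStep_def, hy, Option.bind_some] at h2
                exact e0_avoid hG hnm hyn hym h2
              obtain ⟨k', hk'le, hk'pos, hiter', hcross⟩ :=
                IH k2 (by omega) a2 b ha2nm.1 ha2nm.2 hrest2 hb1 hb2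
              refine ⟨k' + 1, by omega, fun _ => by omega, ?_, ?_⟩
              · rw [iterStep_succ, hGa2, Option.bind_some]; exact hiter'
              · intro j x0 xy hj hx0 hcpx hnpm
                match j with
                | 0 =>
                    rw [iterStep_zero, Option.some_inj] at hx0
                    rw [← hx0] at hcpx
                    rw [hcp] at hcpx
                    rw [Option.some_inj] at hcpx
                    exact absurd (by rw [← hcpx]; exact Or.inr rfl : pairMatch xy (n, m)) hnpm
                | 1 =>
                    have hx0m : x0 = n := by
                      rw [iterStep_succ, hfa, Option.bind_some, iterStep_zero,
                        Option.some_inj] at hx0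
                      exact hx0.symm
                    refine ⟨0, a, by omega, iterStep_zero _ _ _, ?_⟩
                    rw [hcp']
                    rw [hx0m] at hcpx
                    exact hcpx
                | (j2+2) =>
                    have hx0' : iterStep G c j2 a2 = some x0 := by
                      rw [show j2 + 2 = 1 + (1 + j2) by omega, iterStep_add,
                        iterStep_one, hfa, Option.bind_some, iterStep_add,
                        iterStep_one, hstep2, Option.bind_some] at hx0
                      exact hx0
                    obtain ⟨j', x', hj', hit', hcp''⟩ :=
                      hcross j2 x0 xy (by omega) hx0' hcpx hnpm
                    refine ⟨j' + 1, x', by omega, ?_, hcp''⟩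
                    rw [iterStep_succ, hGa2, Option.bind_some]; exact hit'
        · -- plain step
          obtain ⟨hfs', hcp'⟩ := step_plain hG hnm ha1 ha2 hx hxn hxm
          have ha1nm : a1 ≠ n ∧ a1 ≠ m := by
            have h2 := hstep
            rw [faceStep_def, hx, Option.bind_some] at h2
            exact e0_avoid hG hnm hxn hxm h2
          obtain ⟨k', hk'le, hk'pos, hiter', hcross⟩ :=
            IH k1 (by omega) a1 b ha1nm.1 ha1nm.2 hrest hb1 hb2
          have hGa1 : faceStep (contractLine G n m) c a = some a1 := by
            rw [hfs']; exact hstep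
          refine ⟨k' + 1, by omega, fun _ => by omega, ?_, ?_⟩
          · rw [iterStep_succ, hGa1, Option.bind_some]; exact hiter'
          · intro j x0 xy hj hx0 hcpx hnpm
            match j with
            | 0 =>
                rw [iterStep_zero, Option.some_inj] at hx0
                refine ⟨0, a, by omega, iterStep_zero _ _ _, ?_⟩
                rw [← hx0] at hcpx
                rw [hcp']
                exact hcpx
            | (j1+1) =>
                have hx0' : iterStep G c j1 a1 = some x0 := by
                  rw [iterStep_succ, hstep, Option.bind_some] at hx0
                  exact hx0
                obtain ⟨j', x', hj', hit', hcp''⟩ :=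
                  hcross j1 x0 xy (by omega) hx0' hcpx hnpm
                refine ⟨j' + 1, x', by omega, ?_, hcp''⟩
                rw [iterStep_succ, hGa1, Option.bind_some]; exact hit'

theorem preserve (hG : isColored G) (hnm : G.edge 0 n = some m) {c : Fin (d+1)} :
    ∀ k a b, a ≠ n → a ≠ m → iterStep G c k a = some b →
      (∀ j x xy, j < k → iterStep G c j a = some x →
        crossedPair G c x = some xy → ¬ pairMatch xy (n, m)) →
      iterStep (contractLine G n m) c k a = some b ∧
      ∀ j x, j < k → iterStep G c j a = some x →
        crossedPair (contractLine G n m) c x = crossedPair G c x := by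
  intro k
  induction k with
  | zero =>
      intro a b _ _ hab _
      exact ⟨hab, fun j x hj => by omega⟩
  | succ k1 IH =>
      intro a b ha1 ha2 hab hsites
      obtain ⟨a1, hstep, hrest⟩ := iterStep_succ_some hab
      obtain ⟨xy0, hxy0, _⟩ := crossedPair_of_faceStep hstep
      have hnpm0 := hsites 0 a xy0 (by omega) (iterStep_zero _ _ _) hxy0
      obtain ⟨hedge, _⟩ := crossedPair_char hxy0
      have hxn : xy0.1 ≠ n := by
        intro hh
        rw [hh] at hedge
        have : crossedPair G c a = some (n, m) := crossedPair_some_of hedge hnm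
        rw [hxy0] at this
        rw [Option.some_inj] at this
        exact hnpm0 (this ▸ pm_refl (n, m))
      have hxm : xy0.1 ≠ m := by
        intro hh
        rw [hh] at hedge
        have : crossedPair G c a = some (m, n) := crossedPair_some_of hedge (e0_m hG hnm)
        rw [hxy0] at this
        rw [Option.some_inj] at this
        exact hnpm0 (this ▸ (Or.inr rfl : pairMatch (m, n) (n, m)))
      obtain ⟨hfs', hcp'⟩ := step_plain hG hnm ha1 ha2 hedge hxn hxm
      have ha1nm : a1 ≠ n ∧ a1 ≠ m := by
        have h2 := hstep
        rw [faceStep_def, hedge, Option.bind_some] at h2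
        exact e0_avoid hG hnm hxn hxm h2
      have hsites' : ∀ j x xy, j < k1 → iterStep G c j a1 = some x →
          crossedPair G c x = some xy → ¬ pairMatch xy (n, m) := by
        intro j x xy hj hx hcp
        refine hsites (j+1) x xy (by omega) ?_ hcp
        rw [iterStep_succ, hstep, Option.bind_some]; exact hx
      obtain ⟨hiter', hcross'⟩ := IH a1 b ha1nm.1 ha1nm.2 hrest hsites'
      have hGa1 : faceStep (contractLine G n m) c a = some a1 := by
        rw [hfs']; exact hstep
      constructor
      · rw [iterStep_succ, hGa1, Option.bind_some]; exact hiter'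
      · intro j x hj hx
        match j with
        | 0 =>
            rw [iterStep_zero, Option.some_inj] at hx
            rw [← hx]
            exact hcp'
        | (j1+1) =>
            have hx' : iterStep G c j1 a1 = some x := by
              rw [iterStep_succ, hstep, Option.bind_some] at hx
              exact hx
            exact hcross' j1 x (by omega) hx'

end Faces
section Lift
variable {d : ℕ} {V : Type} [DecidableEq V]
variable {G : PreGraph d V} {n m : V}
variable {Γ : Type} [Group Γ]

theorem holFrom_succ_some {S : Finset (V × V)} {h : V × V → Γ} {c : Fin (d+1)}
    {k : ℕ} {a b : V} (hfa : faceStep G c a = some b) :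
    holFrom G S h c (k+1) a = crossVal G S h c a * holFrom G S h c k b := by
  simp only [holFrom, hfa]

theorem crossVal_mem {S : Finset (V × V)} {h : V × V → Γ} {c : Fin (d+1)} {b : V}
    {xy : V × V} (hcp : crossedPair G c b = some xy) (hxy : xy ∈ S) :
    crossVal G S h c b = h xy := by
  simp only [crossVal, hcp, if_pos hxy]

theorem crossVal_swap {S : Finset (V × V)} {h : V × V → Γ} {c : Fin (d+1)} {b : V}
    {xy : V × V} (hcp : crossedPair G c b = some xy) (h1 : xy ∉ S)
    (h2 : (xy.2, xy.1) ∈ S) : crossVal G S h c b = (h (xy.2, xy.1))⁻¹ := by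
  simp only [crossVal, hcp, if_neg h1, if_pos h2]

theorem crossVal_congr {G' : PreGraph d V} {c c' : Fin (d+1)} {S : Finset (V × V)}
    {h : V × V → Γ} {b b' : V}
    (heq : crossedPair G' c' b' = crossedPair G c b)
    (havoid : ∀ xy, crossedPair G c b = some xy → xy.1 ≠ n ∧ xy.2 ≠ n) :
    crossVal G' (S.erase (n, m)) h c' b' = crossVal G S h c b := by
  cases hcp : crossedPair G c b with
  | none => rw [hcp] at heq; simp only [crossVal, heq, hcp]
  | some xy =>
      rw [hcp] at heq
      obtain ⟨hx1, hx2⟩ := havoid xy hcp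
      have e1 : (xy ∈ S.erase (n, m)) = (xy ∈ S) := by
        apply propext
        constructor
        · exact fun hh => (Finset.mem_erase.1 hh).2
        · intro hh
          refine Finset.mem_erase.2 ⟨?_, hh⟩
          intro hcq
          exact hx1 (by rw [hcq])
      have e2 : ((xy.2, xy.1) ∈ S.erase (n, m)) = ((xy.2, xy.1) ∈ S) := by
        apply propext
        constructor
        · exact fun hh => (Finset.mem_erase.1 hh).2
        · intro hh
          refine Finset.mem_erase.2 ⟨?_, hh⟩
          intro hcq
          exact hx2 (by have := congrArg Prod.fst hcq; simpa using this)
      simp only [crossVal, heq, hcp, e1, e2]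

theorem lift (hG : isColored G) (hnm : G.edge 0 n = some m) {c : Fin (d+1)}
    (hc : c ≠ 0) (S : Finset (V × V)) (h : V × V → Γ)
    (hS1 : (n, m) ∈ S) (hS2 : (m, n) ∉ S) (hh : h (n, m) = 1) :
    ∀ k a b, a ≠ n → a ≠ m → iterStep (contractLine G n m) c k a = some b →
    ∃ k', k ≤ k' ∧ iterStep G c k' a = some b ∧
      holFrom G S h c k' a = holFrom (contractLine G n m) (S.erase (n, m)) h c k a ∧
      ∀ j' x', j' < k' → iterStep G c j' a = some x' →
        (∃ xy, crossedPair G c x' = some xy ∧ pairMatch xy (n, m)) ∨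
        ∃ j x, j < k ∧ iterStep (contractLine G n m) c j a = some x ∧
          crossedPair G c x' = crossedPair (contractLine G n m) c x := by
  intro k
  induction k with
  | zero =>
      intro a b _ _ hab
      exact ⟨0, le_refl 0, hab, rfl, fun j' x' hj' => by omega⟩
  | succ k1 IH =>
      intro a b ha1 ha2 hab
      obtain ⟨a1, hstep, hrest⟩ := iterStep_succ_some hab
      obtain ⟨ha1n, ha1m⟩ := contract_step_avoid hstep
      obtain ⟨k', hk'ge, hiter, hhol, hsites⟩ := IH a1 b ha1n ha1m hrest
      cases hx : G.edge c a with
      | none =>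
          obtain ⟨hfs', _, _, _⟩ := step_none (n := n) (m := m) hx
          rw [hfs'] at hstep; cases hstep
      | some x =>
      by_cases hxn : x = n
      · rw [hxn] at hx
        obtain ⟨y, hy, hyn, hym, hfa, hcp, hfs', hcp'⟩ := step_n hG hnm hc ha1 ha2 hx
        have hfm : faceStep G c m = some a1 := by rw [← hfs']; exact hstep
        have havoidM : ∀ xy, crossedPair G c m = some xy → xy.1 ≠ n ∧ xy.2 ≠ n := by
          intro xy hxy
          obtain ⟨h1, h2⟩ := crossedPair_char hxy
          rw [hy] at h1
          have hxy1 : xy.1 = y := (Option.some_inj.1 h1).symm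
          rw [hxy1] at h2 ⊢
          exact ⟨hyn, (e0_avoid hG hnm hyn hym h2).1⟩
        refine ⟨k' + 2, by omega, ?_, ?_, ?_⟩
        · rw [show k' + 2 = 1 + (1 + k') by omega, iterStep_add, iterStep_one, hfa,
            Option.bind_some, iterStep_add, iterStep_one, hfm, Option.bind_some]
          exact hiter
        · have e1 : holFrom G S h c (k'+1+1) a
              = crossVal G S h c a * holFrom G S h c (k'+1) m := holFrom_succ_some hfa
          have e2 : holFrom G S h c (k'+1) m
              = crossVal G S h c m * holFrom G S h c k' a1 := holFrom_succ_some hfm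
          have e3 : holFrom (contractLine G n m) (S.erase (n, m)) h c (k1+1) a
              = crossVal (contractLine G n m) (S.erase (n, m)) h c a *
                holFrom (contractLine G n m) (S.erase (n, m)) h c k1 a1 :=
            holFrom_succ_some hstep
          have e4 : crossVal G S h c a = 1 := by rw [crossVal_mem hcp hS1, hh]
          have e5 : crossVal (contractLine G n m) (S.erase (n, m)) h c a
              = crossVal G S h c m := crossVal_congr hcp' havoidM
          rw [show k' + 2 = k' + 1 + 1 by omega, e1, e2, e3, e4, e5, one_mul, hhol]
        · intro j' x' hj' hx'
          match j' with
          | 0 =>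
              rw [iterStep_zero, Option.some_inj] at hx'
              exact Or.inl ⟨(n, m), by rw [← hx']; exact hcp, pm_refl (n, m)⟩
          | 1 =>
              have hx'm : x' = m := by
                rw [iterStep_succ, hfa, Option.bind_some, iterStep_zero,
                  Option.some_inj] at hx'
                exact hx'.symm
              refine Or.inr ⟨0, a, by omega, iterStep_zero _ _ _, ?_⟩
              rw [hx'm, hcp']
          | (j2+2) =>
              have hx'' : iterStep G c j2 a1 = some x' := by
                rw [show j2 + 2 = 1 + (1 + j2) by omega, iterStep_add, iterStep_one,
                  hfa, Option.bind_some, iterStep_add, iterStep_one, hfm,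
                  Option.bind_some] at hx'
                exact hx'
              rcases hsites j2 x' (by omega) hx'' with hl | ⟨j, x0, hj, hit, hcpeq⟩
              · exact Or.inl hl
              · refine Or.inr ⟨j + 1, x0, by omega, ?_, hcpeq⟩
                rw [iterStep_succ, hstep, Option.bind_some]; exact hit
      · by_cases hxm : x = m
        · rw [hxm] at hx
          obtain ⟨y, hy, hyn, hym, hfa, hcp, hfs', hcp'⟩ := step_m hG hnm hc ha1 ha2 hx
          have hfm : faceStep G c n = some a1 := by rw [← hfs']; exact hstep
          have havoidN : ∀ xy, crossedPair G c n = some xy → xy.1 ≠ n ∧ xy.2 ≠ n := by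
            intro xy hxy
            obtain ⟨h1, h2⟩ := crossedPair_char hxy
            rw [hy] at h1
            have hxy1 : xy.1 = y := (Option.some_inj.1 h1).symm
            rw [hxy1] at h2 ⊢
            exact ⟨hyn, (e0_avoid hG hnm hyn hym h2).1⟩
          refine ⟨k' + 2, by omega, ?_, ?_, ?_⟩
          · rw [show k' + 2 = 1 + (1 + k') by omega, iterStep_add, iterStep_one, hfa,
              Option.bind_some, iterStep_add, iterStep_one, hfm, Option.bind_some]
            exact hiter
          · have e1 : holFrom G S h c (k'+1+1) a
                = crossVal G S h c a * holFrom G S h c (k'+1) n := holFrom_succ_some hfa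
            have e2 : holFrom G S h c (k'+1) n
                = crossVal G S h c n * holFrom G S h c k' a1 := holFrom_succ_some hfm
            have e3 : holFrom (contractLine G n m) (S.erase (n, m)) h c (k1+1) a
                = crossVal (contractLine G n m) (S.erase (n, m)) h c a *
                  holFrom (contractLine G n m) (S.erase (n, m)) h c k1 a1 :=
              holFrom_succ_some hstep
            have e4 : crossVal G S h c a = 1 := by
              rw [crossVal_swap hcp hS2 (by exact hS1), hh, inv_one]
            have e5 : crossVal (contractLine G n m) (S.erase (n, m)) h c a
                = crossVal G S h c n := crossVal_congr hcp' havoidN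
            rw [show k' + 2 = k' + 1 + 1 by omega, e1, e2, e3, e4, e5, one_mul, hhol]
          · intro j' x' hj' hx'
            match j' with
            | 0 =>
                rw [iterStep_zero, Option.some_inj] at hx'
                exact Or.inl ⟨(m, n), by rw [← hx']; exact hcp, Or.inr rfl⟩
            | 1 =>
                have hx'm : x' = n := by
                  rw [iterStep_succ, hfa, Option.bind_some, iterStep_zero,
                    Option.some_inj] at hx'
                  exact hx'.symm
                refine Or.inr ⟨0, a, by omega, iterStep_zero _ _ _, ?_⟩
                rw [hx'm, hcp']
            | (j2+2) =>
                have hx'' : iterStep G c j2 a1 = some x' := by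
                  rw [show j2 + 2 = 1 + (1 + j2) by omega, iterStep_add, iterStep_one,
                    hfa, Option.bind_some, iterStep_add, iterStep_one, hfm,
                    Option.bind_some] at hx'
                  exact hx'
                rcases hsites j2 x' (by omega) hx'' with hl | ⟨j, x0, hj, hit, hcpeq⟩
                · exact Or.inl hl
                · refine Or.inr ⟨j + 1, x0, by omega, ?_, hcpeq⟩
                  rw [iterStep_succ, hstep, Option.bind_some]; exact hit
        · obtain ⟨hfs', hcp'⟩ := step_plain hG hnm ha1 ha2 hx hxn hxm
          have hfa : faceStep G c a = some a1 := by rw [← hfs']; exact hstep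
          have havoidA : ∀ xy, crossedPair G c a = some xy → xy.1 ≠ n ∧ xy.2 ≠ n := by
            intro xy hxy
            obtain ⟨h1, h2⟩ := crossedPair_char hxy
            rw [hx] at h1
            have hxy1 : xy.1 = x := (Option.some_inj.1 h1).symm
            rw [hxy1] at h2 ⊢
            exact ⟨hxn, (e0_avoid hG hnm hxn hxm h2).1⟩
          refine ⟨k' + 1, by omega, ?_, ?_, ?_⟩
          · rw [iterStep_succ, hfa, Option.bind_some]; exact hiter
          · have e1 : holFrom G S h c (k'+1) a
                = crossVal G S h c a * holFrom G S h c k' a1 := holFrom_succ_some hfa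
            have e3 : holFrom (contractLine G n m) (S.erase (n, m)) h c (k1+1) a
                = crossVal (contractLine G n m) (S.erase (n, m)) h c a *
                  holFrom (contractLine G n m) (S.erase (n, m)) h c k1 a1 :=
              holFrom_succ_some hstep
            have e5 : crossVal (contractLine G n m) (S.erase (n, m)) h c a
                = crossVal G S h c a := crossVal_congr hcp' havoidA
            rw [e1, e3, e5, hhol]
          · intro j' x' hj' hx'
            match j' with
            | 0 =>
                rw [iterStep_zero, Option.some_inj] at hx'
                refine Or.inr ⟨0, a, by omega, iterStep_zero _ _ _, ?_⟩
                rw [← hx', hcp']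
            | (j1+1) =>
                have hx'' : iterStep G c j1 a1 = some x' := by
                  rw [iterStep_succ, hfa, Option.bind_some] at hx'
                  exact hx'
                rcases hsites j1 x' (by omega) hx'' with hl | ⟨j, x0, hj, hit, hcpeq⟩
                · exact Or.inl hl
                · refine Or.inr ⟨j + 1, x0, by omega, ?_, hcpeq⟩
                  rw [iterStep_succ, hstep, Option.bind_some]; exact hit

end Lift
section Conn
variable {d : ℕ} {V : Type} [DecidableEq V]
variable {G : PreGraph d V} {n m : V}

theorem rot_inv_site {c : Fin (d+1)} {k j : ℕ} {a b : V}
    (hk : iterStep G c k a = some a) (hj : iterStep G c j a = some b)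
    (hjk : j ≤ k) : iterStep G c (k - j) b = some a := by
  have hsplit : iterStep G c (j + (k - j)) a = some a := by
    rwa [Nat.add_sub_cancel' hjk]
  rw [iterStep_add, hj, Option.bind_some] at hsplit
  exact hsplit

theorem mem_face_pred {c : Fin (d+1)} {k j : ℕ} {a b : V}
    (hk : iterStep G c k a = some a) (hk0 : 0 < k)
    (hj : iterStep G c j a = some b) (hjk : j ≤ k) :
    ∃ z jz, jz < k ∧ iterStep G c jz a = some z ∧ faceStep G c z = some b := by
  have hkb := (rot hk hj hjk).1
  obtain ⟨z, t, ht, hz, hfz⟩ := pred_exists hkb hk0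
  obtain ⟨t', ht', hz'⟩ := (rot hkb (rot_inv_site hk hj hjk) (by omega)).2 t z ht hz
  exact ⟨z, t', ht', hz', hfz⟩

theorem site_succ {c : Fin (d+1)} {k j : ℕ} {a z : V}
    (hk : iterStep G c k a = some a) (hj : j < k)
    (hz : iterStep G c j a = some z) :
    ∃ w, faceStep G c z = some w ∧ iterStep G c (j+1) a = some w := by
  have h2 : iterStep G c (k - j) z = some a := rot_inv_site hk hz (le_of_lt hj)
  cases hkj : k - j with
  | zero => omega
  | succ t =>
      rw [hkj] at h2
      obtain ⟨w, hw, _⟩ := iterStep_succ_some h2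
      refine ⟨w, hw, ?_⟩
      rw [iterStep_add, hz, Option.bind_some, iterStep_one]
      exact hw

theorem stuck_face {c : Fin (d+1)} {x : V} (hfx : faceStep G c x = some x) :
    ∀ t, iterStep G c t x = some x := by
  intro t
  induction t with
  | zero => rfl
  | succ t ih => rw [iterStep_succ, hfx, Option.bind_some]; exact ih

theorem faceCrosses_congr {c : Fin (d+1)} {a : V} {k : ℕ} {r t : V × V}
    (h : FaceCrosses G c a k r) (hpm : pairMatch r t) : FaceCrosses G c a k t := by
  obtain ⟨j, hj, b, hb, xy, hxy, hpmxy⟩ := h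
  exact ⟨j, hj, b, hb, xy, hxy, pm_trans hpmxy hpm⟩

theorem not_pm_of_fst {p : V × V} (h1 : p.1 ≠ n) (h2 : p.1 ≠ m) :
    ¬ pairMatch p (n, m) := by
  intro hpm
  rcases hpm with heq | heq
  · exact h1 (by rw [heq])
  · exact h2 (by rw [heq])

theorem free_unique (hsh : d - 1 ≤ shareCount G n m)
    {c c' : Fin (d+1)} (hc : c ≠ 0) (hc' : c' ≠ 0)
    (hfree : G.edge c n ≠ some m) (hfree' : G.edge c' n ≠ some m) : c = c' := by
  by_contra hne
  have hd1 : 1 ≤ d := by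
    by_contra hd
    have hd0 : d = 0 := by omega
    subst hd0
    exact hc (Fin.ext (by have := c.isLt; omega))
  have hT : (Finset.univ.filter
      (fun z : Fin (d+1) => z ≠ 0 ∧ G.edge z n = some m)) ⊆
      ((Finset.univ.erase 0).erase c).erase c' := by
    intro z hz
    obtain ⟨hz1, hz2⟩ := (Finset.mem_filter.1 hz).2
    refine Finset.mem_erase.2 ⟨?_, Finset.mem_erase.2 ⟨?_, Finset.mem_erase.2 ⟨hz1, Finset.mem_univ z⟩⟩⟩
    · intro hh; subst hh; exact hfree' hz2
    · intro hh; subst hh; exact hfree hz2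
  have hcard := Finset.card_le_card hT
  have h1 : (Finset.univ : Finset (Fin (d+1))).card = d + 1 := by
    rw [Finset.card_univ, Fintype.card_fin]
  have h2 : ((Finset.univ : Finset (Fin (d+1))).erase 0).card = d := by
    rw [Finset.card_erase_of_mem (Finset.mem_univ 0), h1]; omega
  have hcmem : c ∈ (Finset.univ : Finset (Fin (d+1))).erase 0 :=
    Finset.mem_erase.2 ⟨hc, Finset.mem_univ c⟩
  have h3 : (((Finset.univ : Finset (Fin (d+1))).erase 0).erase c).card = d - 1 := by
    rw [Finset.card_erase_of_mem hcmem, h2]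
  have hcmem' : c' ∈ ((Finset.univ : Finset (Fin (d+1))).erase 0).erase c :=
    Finset.mem_erase.2 ⟨fun hh => hne hh.symm, Finset.mem_erase.2 ⟨hc', Finset.mem_univ c'⟩⟩
  have h4 : ((((Finset.univ : Finset (Fin (d+1))).erase 0).erase c).erase c').card = d - 1 - 1 := by
    rw [Finset.card_erase_of_mem hcmem', h3]
  rw [h4] at hcard
  unfold shareCount at hsh
  omega

theorem cross_rho (hG : isColored G) (hnm : G.edge 0 n = some m) {c : Fin (d+1)}
    (hc : c ≠ 0) {a : V} {k : ℕ} (hcf : ClosedFace G c a k)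
    (hpm : FaceCrosses G c a k (n, m))
    {r : V × V} (hr : FaceCrosses G c a k r) (hrnpm : ¬ pairMatch r (n, m)) :
    ∃ b1 w, G.edge c n = some b1 ∧ b1 ≠ n ∧ b1 ≠ m ∧ G.edge 0 b1 = some w ∧
      FaceCrosses G c a k (b1, w) := by
  obtain ⟨hk0, hclose⟩ := hcf
  obtain ⟨j, hj, b, hb, xy, hxy, hpmxy⟩ := hpm
  rcases hpmxy with heq | heq
  · -- xy = (n, m) : crossing at site b with edge c b = n ; next node is m
    have hedge : G.edge c b = some n := (crossedPair_char (heq ▸ hxy)).1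
    have hfb : faceStep G c b = some m := by
      rw [faceStep_def, hedge, Option.bind_some, hnm]
    have hm_site : iterStep G c (j+1) a = some m := by
      rw [iterStep_add, hb, Option.bind_some, iterStep_one]
      exact hfb
    have hj1k : j + 1 ≤ k := hj
    have hcmn : G.edge c m ≠ some n := by
      intro hshared
      have hfm : faceStep G c m = some m := by
        rw [faceStep_def, hshared, Option.bind_some, hnm]
      obtain ⟨jr, hjr, br, hbr, xyr, hxyr, hpmr⟩ := hr
      obtain ⟨t', ht', hbr'⟩ := (rot hclose hm_site hj1k).2 jr br hjr hbr
      rw [stuck_face hfm t', Option.some_inj] at hbr'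
      rw [← hbr'] at hxyr
      have : crossedPair G c m = some (n, m) := crossedPair_some_of hshared hnm
      rw [this, Option.some_inj] at hxyr
      rw [← hxyr] at hpmr
      exact hrnpm (pm_symm hpmr)
    have hb1 : G.edge c n = some b := edge_symm hG hedge
    have hbn : b ≠ n := fun hh => edge_irr hG c n (hh ▸ hb1)
    have hbm : b ≠ m := fun hh => hcmn (by rw [← hh]; exact hedge)
    obtain ⟨z, jz, hjz, hzsite, hfzb⟩ := mem_face_pred hclose hk0 hb (le_of_lt hj)
    obtain ⟨xyz, hxyz, hxyz2⟩ := crossedPair_of_faceStep hfzb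
    obtain ⟨hez, he0z⟩ := crossedPair_char hxyz
    rw [hxyz2] at he0z
    have hw : G.edge 0 b = some xyz.1 := edge_symm hG he0z
    refine ⟨b, xyz.1, hb1, hbn, hbm, hw, jz, hjz, z, hzsite, xyz, hxyz, ?_⟩
    right
    exact Prod.ext rfl hxyz2
  · -- xy = (m, n) : crossing at site b with edge c b = m ; next node is n
    have hedge : G.edge c b = some m := (crossedPair_char (heq ▸ hxy)).1
    have hfb : faceStep G c b = some n := by
      rw [faceStep_def, hedge, Option.bind_some, e0_m hG hnm]
    have hn_site' : iterStep G c (j+1) a = some n := by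
      rw [iterStep_add, hb, Option.bind_some, iterStep_one]
      exact hfb
    obtain ⟨jn, hjn, hn_site⟩ : ∃ jn, jn < k ∧ iterStep G c jn a = some n := by
      by_cases hjk : j + 1 < k
      · exact ⟨j+1, hjk, hn_site'⟩
      · have hjk' : j + 1 = k := by omega
        rw [hjk', hclose, Option.some_inj] at hn_site'
        exact ⟨0, hk0, by rw [iterStep_zero, hn_site']⟩
    have hshared_not : G.edge c n ≠ some m := by
      intro hshared
      have hfn : faceStep G c n = some n := by
        rw [faceStep_def, hshared, Option.bind_some, e0_m hG hnm]
      obtain ⟨jr, hjr, br, hbr, xyr, hxyr, hpmr⟩ := hr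
      obtain ⟨t', ht', hbr'⟩ := (rot hclose hn_site (le_of_lt hjn)).2 jr br hjr hbr
      rw [stuck_face hfn t', Option.some_inj] at hbr'
      rw [← hbr'] at hxyr
      have : crossedPair G c n = some (m, n) := crossedPair_some_of hshared (e0_m hG hnm)
      rw [this, Option.some_inj] at hxyr
      rw [← hxyr] at hpmr
      exact hrnpm (pm_trans (pm_symm hpmr) (Or.inr rfl))
    have hnv : n ∈ G.verts := (hG.2.1 0 n m hnm).1
    obtain ⟨y, hy⟩ := Option.isSome_iff_exists.1 (hG.2.2.2 c hc n hnv)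
    have hyn : y ≠ n := fun hh => edge_irr hG c n (hh ▸ hy)
    have hym : y ≠ m := fun hh => hshared_not (hh ▸ hy)
    obtain ⟨w, hfw, _⟩ := site_succ hclose hjn hn_site
    have hw : G.edge 0 y = some w := by
      rw [faceStep_def, hy, Option.bind_some] at hfw
      exact hfw
    refine ⟨y, w, hy, hyn, hym, hw, jn, hjn, n, hn_site, (y, w),
      crossedPair_some_of hy hw, pm_refl _⟩

theorem push_face (hG : isColored G) (hnm : G.edge 0 n = some m) {c : Fin (d+1)}
    (hc : c ≠ 0) {a : V} {k : ℕ} (hcf : ClosedFace G c a k)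
    {r : V × V} (hr : FaceCrosses G c a k r) (hrnpm : ¬ pairMatch r (n, m)) :
    ∃ a' k', ClosedFace (contractLine G n m) c a' k' ∧
      ∀ q, ¬ pairMatch q (n, m) → FaceCrosses G c a k q →
        FaceCrosses (contractLine G n m) c a' k' q := by
  obtain ⟨hk0, hclose⟩ := hcf
  obtain ⟨j, hj, b, hb, xy, hxy, hpmxy⟩ := hr
  obtain ⟨hedge, he0⟩ := crossedPair_char hxy
  have hxy1n : xy.1 ≠ n := by
    intro hh
    rw [hh] at he0
    rw [hnm, Option.some_inj] at he0
    refine hrnpm (pm_trans (pm_symm hpmxy) ?_)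
    left
    exact Prod.ext hh he0.symm
  have hxy1m : xy.1 ≠ m := by
    intro hh
    rw [hh] at he0
    rw [e0_m hG hnm, Option.some_inj] at he0
    refine hrnpm (pm_trans (pm_symm hpmxy) ?_)
    right
    exact Prod.ext hh he0.symm
  obtain ⟨hxy2n, hxy2m⟩ := e0_avoid hG hnm hxy1n hxy1m he0
  have hfb : faceStep G c b = some xy.2 := faceStep_of_crossedPair hxy
  have hsucc : iterStep G c (j+1) a = some xy.2 := by
    rw [iterStep_add, hb, Option.bind_some, iterStep_one]
    exact hfb
  have hj1k : j + 1 ≤ k := hj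
  have hk_a' : iterStep G c k xy.2 = some xy.2 := (rot hclose hsucc hj1k).1
  obtain ⟨k', _, hk'pos, hiter', hcross⟩ :=
    down hG hnm hc k xy.2 xy.2 hxy2n hxy2m hk_a' hxy2n hxy2m
  refine ⟨xy.2, k', ⟨hk'pos hk0, hiter'⟩, ?_⟩
  intro q hqnpm hq
  obtain ⟨jq, hjq, bq, hbq, xyq, hxyq, hpmq⟩ := hq
  obtain ⟨t', ht', hbq'⟩ := (rot hclose hsucc hj1k).2 jq bq hjq hbq
  have hnpmq : ¬ pairMatch xyq (n, m) := fun hh => hqnpm (pm_trans (pm_symm hpmq) hh)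
  obtain ⟨j', x', hj', hit', hcp'⟩ := hcross t' bq xyq ht' hbq' hxyq hnpmq
  exact ⟨j', hj', x', hit', xyq, hcp', hpmq⟩

end Conn
section Step
variable {d : ℕ} {V : Type} [DecidableEq V]

def ATT (G : PreGraph d V) (n m : V) (x : V × V) : Prop :=
  ∃ (c : Fin (d+1)) (b1 w : V), c ≠ 0 ∧ G.edge c n = some b1 ∧ b1 ≠ n ∧ b1 ≠ m ∧
    G.edge 0 b1 = some w ∧
    Relation.EqvGen (WholeFaceRel (contractLine G n m)) (b1, w) x

variable {G : PreGraph d V} {n m : V}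

theorem att_join (hsh : d - 1 ≤ shareCount G n m) {x y : V × V}
    (hx : ATT G n m x) (hy : ATT G n m y) :
    Relation.EqvGen (WholeFaceRel (contractLine G n m)) x y := by
  obtain ⟨c, b1, w, hc, hb, hbn, hbm, hw, hE⟩ := hx
  obtain ⟨c', b1', w', hc', hb', hbn', hbm', hw', hE'⟩ := hy
  have hcc : c = c' := free_unique hsh hc hc'
    (by rw [hb]; intro hh; exact hbm (Option.some_inj.1 hh))
    (by rw [hb']; intro hh; exact hbm' (Option.some_inj.1 hh))
  subst hcc
  rw [hb] at hb'
  have hb1e : b1 = b1' := Option.some_inj.1 hb'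
  subst hb1e
  rw [hw] at hw'
  have hwe : w = w' := Option.some_inj.1 hw'
  subst hwe
  exact Relation.EqvGen.trans _ _ _ (Relation.EqvGen.symm _ _ hE) hE'

theorem stepConn (hG : isColored G) (hnm : G.edge 0 n = some m)
    (hsh : d - 1 ≤ shareCount G n m) (hGc : GraphConnected G) :
    GraphConnected (contractLine G n m) := by
  intro p q hp hq
  have hline : ∀ t : V × V, isLine (contractLine G n m) t →
      isLine G t ∧ ¬ pairMatch t (n, m) := by
    intro t ht
    have ht' : reconnect (G.edge 0) n m t.1 = some t.2 := ht
    obtain ⟨⟨h1, h2⟩, ⟨h3, h4⟩, hcase⟩ := recon_inv ht'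
    constructor
    · rcases hcase with hcc | ⟨hcc, _⟩ | ⟨hcc, _⟩
      · exact hcc
      · exact absurd (edge_inj hG hcc (e0_m hG hnm)) h2
      · exact absurd (edge_inj hG hcc hnm) h1
    · exact not_pm_of_fst h1 h2
  obtain ⟨hpG, hpnpm⟩ := hline p hp
  obtain ⟨hqG, hqnpm⟩ := hline q hq
  have main : ∀ r s, Relation.EqvGen (WholeFaceRel G) r s →
      ((pairMatch r (n,m) ∧ pairMatch s (n,m)) ∨
       (pairMatch r (n,m) ∧ ¬pairMatch s (n,m) ∧ ATT G n m s) ∨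
       (¬pairMatch r (n,m) ∧ pairMatch s (n,m) ∧ ATT G n m r) ∨
       (¬pairMatch r (n,m) ∧ ¬pairMatch s (n,m) ∧
         Relation.EqvGen (WholeFaceRel (contractLine G n m)) r s)) := by
    intro r s hrs
    induction hrs with
    | rel r s hF =>
        obtain ⟨c, hc, a, k, hcf, hcr, hcs⟩ := hF
        by_cases hr : pairMatch r (n,m) <;> by_cases hs : pairMatch s (n,m)
        · exact Or.inl ⟨hr, hs⟩
        · have hpm0 : FaceCrosses G c a k (n, m) := faceCrosses_congr hcr hr
          obtain ⟨b1, w, hb1, hbn, hbm, hw, hrho⟩ :=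
            cross_rho hG hnm hc hcf hpm0 hcs hs
          obtain ⟨a', k', hcf', htr⟩ := push_face hG hnm hc hcf hcs hs
          refine Or.inr (Or.inl ⟨hr, hs, c, b1, w, hc, hb1, hbn, hbm, hw, ?_⟩)
          exact Relation.EqvGen.rel _ _ ⟨c, hc, a', k', hcf',
            htr (b1, w) (not_pm_of_fst hbn hbm) hrho, htr s hs hcs⟩
        · have hpm0 : FaceCrosses G c a k (n, m) := faceCrosses_congr hcs hs
          obtain ⟨b1, w, hb1, hbn, hbm, hw, hrho⟩ :=
            cross_rho hG hnm hc hcf hpm0 hcr hr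
          obtain ⟨a', k', hcf', htr⟩ := push_face hG hnm hc hcf hcr hr
          refine Or.inr (Or.inr (Or.inl ⟨hr, hs, c, b1, w, hc, hb1, hbn, hbm, hw, ?_⟩))
          exact Relation.EqvGen.rel _ _ ⟨c, hc, a', k', hcf',
            htr (b1, w) (not_pm_of_fst hbn hbm) hrho, htr r hr hcr⟩
        · obtain ⟨a', k', hcf', htr⟩ := push_face hG hnm hc hcf hcr hr
          exact Or.inr (Or.inr (Or.inr ⟨hr, hs, Relation.EqvGen.rel _ _
            ⟨c, hc, a', k', hcf', htr r hr hcr, htr s hs hcs⟩⟩))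
    | refl r =>
        by_cases hr : pairMatch r (n,m)
        · exact Or.inl ⟨hr, hr⟩
        · exact Or.inr (Or.inr (Or.inr ⟨hr, hr, Relation.EqvGen.refl r⟩))
    | symm r s _ ih =>
        rcases ih with ⟨h1, h2⟩ | ⟨h1, h2, h3⟩ | ⟨h1, h2, h3⟩ | ⟨h1, h2, h3⟩
        · exact Or.inl ⟨h2, h1⟩
        · exact Or.inr (Or.inr (Or.inl ⟨h2, h1, h3⟩))
        · exact Or.inr (Or.inl ⟨h2, h1, h3⟩)
        · exact Or.inr (Or.inr (Or.inr ⟨h2, h1, Relation.EqvGen.symm _ _ h3⟩))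
    | trans r s t _ _ ih1 ih2 =>
        rcases ih1 with ⟨h1, h2⟩ | ⟨h1, h2, h3⟩ | ⟨h1, h2, h3⟩ | ⟨h1, h2, h3⟩ <;>
          rcases ih2 with ⟨g1, g2⟩ | ⟨g1, g2, g3⟩ | ⟨g1, g2, g3⟩ | ⟨g1, g2, g3⟩
        · exact Or.inl ⟨h1, g2⟩
        · exact Or.inr (Or.inl ⟨h1, g2, g3⟩)
        · exact absurd h2 g1
        · exact absurd h2 g1
        · exact absurd g1 h2
        · exact absurd g1 h2
        · exact Or.inl ⟨h1, g2⟩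
        · refine Or.inr (Or.inl ⟨h1, g2, ?_⟩)
          obtain ⟨c, b1, w, hc, hb, hbn, hbm, hw, hE⟩ := h3
          exact ⟨c, b1, w, hc, hb, hbn, hbm, hw, Relation.EqvGen.trans _ _ _ hE g3⟩
        · exact Or.inr (Or.inr (Or.inl ⟨h1, g2, h3⟩))
        · exact Or.inr (Or.inr (Or.inr ⟨h1, g2, att_join hsh h3 g3⟩))
        · exact absurd h2 g1
        · exact absurd h2 g1
        · exact absurd g1 h2
        · exact absurd g1 h2
        · refine Or.inr (Or.inr (Or.inl ⟨h1, g2, ?_⟩))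
          obtain ⟨c, b1, w, hc, hb, hbn, hbm, hw, hE⟩ := g3
          exact ⟨c, b1, w, hc, hb, hbn, hbm, hw,
            Relation.EqvGen.trans _ _ _ hE (Relation.EqvGen.symm _ _ h3)⟩
        · exact Or.inr (Or.inr (Or.inr ⟨h1, g2, Relation.EqvGen.trans _ _ _ h3 g3⟩))
  rcases main p q (hGc p q hpG hqG) with ⟨h1, _⟩ | ⟨h1, _⟩ | ⟨_, h2, _⟩ | ⟨_, _, h3⟩
  · exact absurd h1 hpnpm
  · exact absurd h1 hpnpm
  · exact absurd h2 hqnpm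
  · exact h3

end Step
section Lists
variable {d : ℕ} {V : Type} [DecidableEq V]

theorem melo_fst_ne : ∀ (l : List (V × V)) (G : PreGraph d V) (x : V),
    G.edge 0 x = none → MeloSteps G l → ∀ p ∈ l, p.1 ≠ x := by
  intro l
  induction l with
  | nil => intro _ _ _ _ p hp; cases hp
  | cons p0 r ih =>
      intro G x hx hms p hp
      obtain ⟨hline, _, hms'⟩ := hms
      rcases List.mem_cons.1 hp with rfl | hp'
      · intro hh
        have hl : G.edge 0 p.1 = some p.2 := hline
        rw [hh, hx] at hl
        cases hl
      · exact ih _ x (contract_edge_none 0 hx) hms' p hp'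

theorem exists_shared (hd : 2 ≤ d) {G : PreGraph d V} {n m : V}
    (hsh : d - 1 ≤ shareCount G n m) :
    ∃ c : Fin (d+1), c ≠ 0 ∧ G.edge c n = some m := by
  have hpos : 0 < shareCount G n m := by omega
  unfold shareCount at hpos
  obtain ⟨c, hc⟩ := Finset.card_pos.1 hpos
  exact ⟨c, (Finset.mem_filter.1 hc).2⟩

theorem head_face {G : PreGraph d V} {n m : V} (hG : isColored G)
    (hnm : G.edge 0 n = some m) {c : Fin (d+1)} (hshared : G.edge c n = some m)
    {S : Finset (V × V)} (hS1 : (n, m) ∈ S) : ClosedFaceIn G S c m 1 := by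
  have hcm : G.edge c m = some n := edge_symm hG hshared
  have hfs : faceStep G c m = some m := by
    rw [faceStep_def, hcm, Option.bind_some, hnm]
  have hcp : crossedPair G c m = some (n, m) := crossedPair_some_of hcm hnm
  refine ⟨⟨by omega, by rw [iterStep_one]; exact hfs⟩, ?_⟩
  intro j hj b hb
  have hj0 : j = 0 := by omega
  subst hj0
  rw [iterStep_zero, Option.some_inj] at hb
  exact ⟨(n, m), hS1, (n, m), by rw [← hb]; exact hcp, pm_refl _⟩

theorem head_hol {G : PreGraph d V} {n m : V} (hG : isColored G)
    (hnm : G.edge 0 n = some m) {c : Fin (d+1)} (hshared : G.edge c n = some m)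
    {S : Finset (V × V)} (hS1 : (n, m) ∈ S) {Γ : Type} [Group Γ] (h : V × V → Γ) :
    holFrom G S h c 1 m = h (n, m) := by
  have hcm : G.edge c m = some n := edge_symm hG hshared
  have hfs : faceStep G c m = some m := by
    rw [faceStep_def, hcm, Option.bind_some, hnm]
  have hcp : crossedPair G c m = some (n, m) := crossedPair_some_of hcm hnm
  rw [holFrom_succ_some hfs, crossVal_mem hcp hS1]
  show h (n, m) * 1 = h (n, m)
  rw [mul_one]

theorem part1_main (hd2 : 2 ≤ d) {Γ : Type} [Group Γ] (h : V × V → Γ) :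
    ∀ (l : List (V × V)) (G : PreGraph d V), isColored G → l.Nodup → MeloSteps G l →
      (∀ c : Fin (d+1), c ≠ 0 → ∀ a k, ClosedFaceIn G l.toFinset c a k →
        holFrom G l.toFinset h c k a = 1) →
      ∀ p ∈ l, h p = 1 := by
  intro l
  induction l with
  | nil => intro G _ _ _ _ p hp; cases hp
  | cons p0 r ih =>
      obtain ⟨n, m⟩ := p0
      intro G hG hnd hms hyp q hq
      obtain ⟨hline, hsh, hms'⟩ := hms
      have hnm : G.edge 0 n = some m := hline
      have hne := line_ne hG hnm
      have hS1 : (n, m) ∈ ((n,m) :: r).toFinset := by simp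
      have hp0r : (n, m) ∉ r := (List.nodup_cons.1 hnd).1
      have hndr : r.Nodup := (List.nodup_cons.1 hnd).2
      have hmn_not : (m, n) ∉ ((n,m) :: r).toFinset := by
        rw [List.mem_toFinset]
        intro hmem
        rcases List.mem_cons.1 hmem with heq | hmem'
        · exact hne (congrArg Prod.fst heq).symm
        · exact melo_fst_ne r (contractLine G n m) m
            (contract_edge_deleted G 0 (Or.inr rfl)) hms' (m, n) hmem' rfl
      have hSerase : ((n,m) :: r).toFinset.erase (n,m) = r.toFinset := by
        rw [List.toFinset_cons]
        exact Finset.erase_insert (fun hmem => hp0r (List.mem_toFinset.1 hmem))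
      obtain ⟨c0, hc0, hshared⟩ := exists_shared hd2 hsh
      have hcf := head_face hG hnm hshared hS1
      have hh1 : h (n, m) = 1 := by
        have := hyp c0 hc0 m 1 hcf
        rwa [head_hol hG hnm hshared hS1 h] at this
      have hG1 : isColored (contractLine G n m) :=
        isColored_contract hG (hG.2.1 0 n m hnm).1 (hG.2.1 0 n m hnm).2 hne
      have hyp1 : ∀ c : Fin (d+1), c ≠ 0 → ∀ a k,
          ClosedFaceIn (contractLine G n m) r.toFinset c a k →
          holFrom (contractLine G n m) r.toFinset h c k a = 1 := by
        intro c hc a k hcfi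
        obtain ⟨⟨hk0, hclose⟩, hsites⟩ := hcfi
        have hanm : a ≠ n ∧ a ≠ m := by
          cases k with
          | zero => omega
          | succ k0 =>
              obtain ⟨a1, hstp, _⟩ := iterStep_succ_some hclose
              constructor
              · intro hh
                rw [faceStep_def, contract_edge_deleted G c (Or.inl hh)] at hstp
                cases hstp
              · intro hh
                rw [faceStep_def, contract_edge_deleted G c (Or.inr hh)] at hstp
                cases hstp
        obtain ⟨k', hk'ge, hiter, hhol, hsitesL⟩ :=
          lift hG hnm hc (((n,m) :: r).toFinset) h hS1 hmn_not hh1 k a a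
            hanm.1 hanm.2 hclose
        rw [hSerase] at hhol
        rw [← hhol]
        refine hyp c hc a k' ⟨⟨by omega, hiter⟩, ?_⟩
        intro j hj b hb
        rcases hsitesL j b hj hb with ⟨xy, hxy, hpm⟩ | ⟨j0, x0, hj0, hit0, hcpeq⟩
        · exact ⟨(n, m), hS1, xy, hxy, hpm⟩
        · obtain ⟨q0, hq0S, xy, hxy, hpm⟩ := hsites j0 hj0 x0 hit0
          refine ⟨q0, ?_, xy, ?_, hpm⟩
          · rw [List.toFinset_cons]
            exact Finset.mem_insert_of_mem hq0S
          · rw [hcpeq]; exact hxy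
      rcases List.mem_cons.1 hq with rfl | hq'
      · exact hh1
      · exact ih (contractLine G n m) hG1 hndr hms' hyp1 q hq'

theorem samebubble_d0 {G : PreGraph 0 V} {a b : V} (h : SameBubble G a b) : a = b := by
  induction h with
  | rel x y hxy =>
      obtain ⟨c, hc, _⟩ := hxy
      exact absurd (Fin.fin_one_eq_zero c) hc
  | refl x => rfl
  | symm _ _ _ ih => exact ih.symm
  | trans _ _ _ _ _ ih1 ih2 => exact ih1.trans ih2

theorem samebubble_d1 {G : PreGraph 1 V} (hG : isColored G) {a b : V}
    (h : SameBubble G a b) : a = b ∨ G.edge 1 a = some b := by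
  induction h with
  | rel x y hxy =>
      obtain ⟨c, hc, hcy⟩ := hxy
      have hc1 : c = 1 := by
        have h2 := c.isLt
        have h3 : c.val ≠ 0 := fun hh => hc (Fin.ext hh)
        apply Fin.ext
        show c.val = 1
        omega
      right; rw [← hc1]; exact hcy
  | refl x => left; rfl
  | symm x y _ ih =>
      rcases ih with rfl | hedge
      · left; rfl
      · right; exact edge_symm hG hedge
  | trans x y z _ _ ih1 ih2 =>
      rcases ih1 with rfl | h1
      · exact ih2
      · rcases ih2 with rfl | h2
        · right; exact h1
        · left; exact edge_inj hG h1 (edge_symm hG h2)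

def Disj (p q : V × V) : Prop := p.1 ≠ q.1 ∧ p.1 ≠ q.2 ∧ p.2 ≠ q.1 ∧ p.2 ≠ q.2

theorem disj_symm {p q : V × V} (h : Disj p q) : Disj q p :=
  ⟨h.1.symm, h.2.2.1.symm, h.2.1.symm, h.2.2.2.symm⟩

theorem melo_mem : ∀ (l : List (V × V)) (G : PreGraph d V), isColored G →
    MeloSteps G l → ∀ p ∈ l, p.1 ∈ G.verts ∧ p.2 ∈ G.verts ∧ p.1 ≠ p.2 := by
  intro l
  induction l with
  | nil => intro _ _ _ p hp; cases hp
  | cons p0 r ih =>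
      intro G hG hms p hp
      obtain ⟨hline, _, hms'⟩ := hms
      have h1 := hG.2.1 0 p0.1 p0.2 hline
      rcases List.mem_cons.1 hp with rfl | hp'
      · exact ⟨h1.1, h1.2, line_ne hG hline⟩
      · have hres := ih (contractLine G p0.1 p0.2)
          (isColored_contract hG h1.1 h1.2 (line_ne hG hline)) hms' p hp'
        exact ⟨(mem_contract_verts.1 hres.1).1, (mem_contract_verts.1 hres.2.1).1,
          hres.2.2⟩

theorem melo_pairwise : ∀ (l : List (V × V)) (G : PreGraph d V), isColored G →
    MeloSteps G l → l.Pairwise Disj := by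
  intro l
  induction l with
  | nil => intro _ _ _; exact List.Pairwise.nil
  | cons p0 r ih =>
      intro G hG hms
      obtain ⟨hline, _, hms'⟩ := hms
      have h1 := hG.2.1 0 p0.1 p0.2 hline
      have hG1 := isColored_contract hG h1.1 h1.2 (line_ne hG hline)
      refine List.Pairwise.cons ?_ (ih _ hG1 hms')
      intro q hq
      obtain ⟨hq1, hq2, _⟩ := melo_mem r _ hG1 hms' q hq
      obtain ⟨_, hq1n, hq1m⟩ := mem_contract_verts.1 hq1
      obtain ⟨_, hq2n, hq2m⟩ := mem_contract_verts.1 hq2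
      exact ⟨Ne.symm hq1n, Ne.symm hq2n, Ne.symm hq1m, Ne.symm hq2m⟩

def SymIrr (G : PreGraph d V) : Prop :=
  (∀ c a b, G.edge c a = some b → G.edge c b = some a) ∧ ∀ c a, G.edge c a ≠ some a

theorem symirr_contract {G : PreGraph d V} (h : SymIrr G) {n m : V} (hne : n ≠ m) :
    SymIrr (contractLine G n m) := by
  constructor
  · intro c a b hab
    rw [contract_edge] at hab ⊢
    exact recon_symm (h.1 c) a b hab
  · intro c a
    rw [contract_edge]
    exact recon_irr (h.1 c) (h.2 c) hne a

theorem contract_comm {G : PreGraph d V} (hS : SymIrr G) {p q : V × V}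
    (hp : p.1 ≠ p.2) (hq : q.1 ≠ q.2) (hd : Disj p q) :
    contractLine (contractLine G p.1 p.2) q.1 q.2
      = contractLine (contractLine G q.1 q.2) p.1 p.2 := by
  obtain ⟨d1, d2, d3, d4⟩ := hd
  unfold contractLine
  congr 1
  · ext a
    simp only [Finset.mem_sdiff, Finset.mem_insert, Finset.mem_singleton]
    tauto
  · funext c
    exact recon_comm (hS.1 c) (hS.2 c) hp hq d1 d2 d3 d4

theorem contractList_perm_eq {l1 l2 : List (V × V)} (hperm : l1.Perm l2) :
    ∀ G : PreGraph d V, SymIrr G → l1.Pairwise Disj → (∀ p ∈ l1, p.1 ≠ p.2) →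
      contractList G l1 = contractList G l2 := by
  induction hperm with
  | nil => intro G _ _ _; rfl
  | cons x _ ih =>
      intro G hSym hpw hne
      show contractList (contractLine G x.1 x.2) _ = contractList (contractLine G x.1 x.2) _
      exact ih _ (symirr_contract hSym (hne x (List.mem_cons_self)))
        ((List.pairwise_cons.1 hpw).2)
        (fun p hp => hne p (List.mem_cons_of_mem x hp))
  | swap x y t =>
      intro G hSym hpw hne
      show contractList (contractLine (contractLine G y.1 y.2) x.1 x.2) t
        = contractList (contractLine (contractLine G x.1 x.2) y.1 y.2) t
      have hxy : Disj y x := (List.pairwise_cons.1 hpw).1 x (List.mem_cons_self)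
      rw [contract_comm hSym (hne y (List.mem_cons_self))
        (hne x (List.mem_cons_of_mem y (List.mem_cons_self))) hxy]
  | trans h12 h23 ih1 ih2 =>
      intro G hSym hpw hne
      rw [ih1 G hSym hpw hne]
      refine ih2 G hSym ?_ ?_
      · exact (List.Perm.pairwise_iff (by intro x y hh; exact disj_symm hh) h12).1 hpw
      · intro p hp
        exact hne p (h12.mem_iff.2 hp)

theorem conn_list : ∀ (l : List (V × V)) (G : PreGraph d V), isColored G →
    GraphConnected G → MeloSteps G l → GraphConnected (contractList G l) := by
  intro l
  induction l with
  | nil => intro G _ hGc _; exact hGc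
  | cons p r ih =>
      intro G hG hGc hms
      obtain ⟨hline, hsh, hms'⟩ := hms
      have h1 := hG.2.1 0 p.1 p.2 hline
      exact ih (contractLine G p.1 p.2)
        (isColored_contract hG h1.1 h1.2 (line_ne hG hline))
        (stepConn hG hline hsh hGc) hms'

end Lists

end Melo

open Melo in
/-- **Every melopole is tracial.**  Let `H` be a connected single-vertex subgraph of a
connected graph `G` whose `k` lines admit an ordering `l₁, …, l_k` such that
`{l₁,…,l_i}/{l₁,…,l_{i-1}}` is a `d`-dipole for every `1 ≤ i ≤ k` (i.e. `H` is a
melopole).  Then `H` is contractible — any flat discrete connection on `H` is trivial: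
if all holonomies around the internal faces of `H` are the identity then all line group
elements are the identity (the spanning tree to gauge-fix is empty since `H` is a
single-vertex tadpole graph) — and the contracted graph `G/H` is connected. -/
theorem melopole_is_tracial {d : ℕ} {V : Type} [DecidableEq V]
    (G : PreGraph d V) (hG : isColored G) (hGconn : GraphConnected G)
    (S : Finset (V × V)) (hS : IsMelopole G S) :
    (∀ (Γ : Type) [Group Γ], ∀ h : V × V → Γ,
        (∀ c : Fin (d + 1), c ≠ 0 → ∀ a k, ClosedFaceIn G S c a k →
          holFrom G S h c k a = 1) →
        ∀ p ∈ S, h p = 1) ∧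
    (∀ l : List (V × V), l.Nodup → l.toFinset = S →
        GraphConnected (contractList G l)) := by
  classical
  obtain ⟨hne0, hlines, hbub1, hbub2, hconn, L, hLnd, hLS, hms⟩ := hS
  constructor
  · intro Γ _inst h hyp p hpS
    obtain hd0 | hd1 | hd2 : d = 0 ∨ d = 1 ∨ 2 ≤ d := by omega
    · subst hd0
      have hb := samebubble_d0 (hbub2 p hpS)
      have hl : G.edge 0 p.1 = some p.2 := hlines p hpS
      rw [hb] at hl
      exact absurd hl (edge_irr hG 0 p.2)
    · subst hd1
      cases L with
      | nil =>
          rw [← hLS] at hpS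
          simp at hpS
      | cons p0 r =>
        obtain ⟨n, m⟩ := p0
        obtain ⟨hline0, _, hms'⟩ := hms
        have hnm : G.edge 0 n = some m := hline0
        have hne := line_ne hG hnm
        have hnmS : (n, m) ∈ S := by rw [← hLS]; simp
        have hshared : G.edge 1 n = some m := by
          rcases samebubble_d1 hG (hbub2 (n, m) hnmS) with heq | hedge
          · exact absurd heq hne
          · exact hedge
        cases r with
        | cons q r2 =>
            exfalso
            have hq : q ∈ q :: r2 := List.mem_cons_self
            have hqS : q ∈ S := by rw [← hLS]; simp
            have hq1m : q.1 ≠ m := melo_fst_ne (q :: r2) (contractLine G n m) m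
              (contract_edge_deleted G 0 (Or.inr rfl)) hms' q hq
            have hql : G.edge 0 q.1 = some q.2 := hlines q hqS
            rcases samebubble_d1 hG (hbub1 (n,m) hnmS q hqS) with heq | hedge
            · rcases samebubble_d1 hG (hbub2 q hqS) with heq2 | hedge2
              · rw [← heq2] at hql
                exact edge_irr hG 0 q.1 hql
              · rw [← heq, hshared] at hedge2
                have hq2m : q.2 = m := (Option.some_inj.1 hedge2).symm
                have hqeq : q = (n, m) := Prod.ext heq.symm hq2m
                refine (List.nodup_cons.1 hLnd).1 ?_
                rw [← hqeq]
                exact hq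
            · rw [hshared] at hedge
              exact hq1m (Option.some_inj.1 hedge).symm
        | nil =>
            have hpeq : p = (n, m) := by
              rw [← hLS] at hpS
              simpa using hpS
            have hcf := head_face hG hnm hshared hnmS
            have h1ne0 : (1 : Fin 2) ≠ 0 := by decide
            have hres := hyp 1 h1ne0 m 1 hcf
            rw [head_hol hG hnm hshared hnmS h] at hres
            rw [hpeq]
            exact hres
    · subst hLS
      exact part1_main hd2 h L G hG hLnd hms hyp p (List.mem_toFinset.1 hpS)
  · intro l hlnd hlS
    have hperm : l.Perm L := by
      rw [List.perm_ext_iff_of_nodup hlnd hLnd]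
      intro a
      rw [← List.mem_toFinset, ← List.mem_toFinset, hlS, hLS]
    have hSym : SymIrr G := ⟨hG.1, hG.2.2.1⟩
    have hpwl : l.Pairwise Disj :=
      (List.Perm.pairwise_iff (by intro x y hh; exact disj_symm hh) hperm).2
        (melo_pairwise L G hG hms)
    have hnel : ∀ p ∈ l, p.1 ≠ p.2 := by
      intro p hp
      exact (melo_mem L G hG hms p (hperm.mem_iff.1 hp)).2.2
    rw [contractList_perm_eq hperm G hSym hpwl hnel]
    exact conn_list L G hG hGconn hms
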